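/- arXiv:2604.21423 — 3 statements merged into one kernel-verified Lean document; each statement's English description precedes it below -/
import Mathlib

section
/- Let L be the Laplace transform of the log-normal distribution with parameters μ ∈ ℝ, σ > 0, and m(x) = −L'(x)/L(x). Then for every c > 1, as x → ∞: L''(cx)/L(x) = o(m(x)²) and (−L'(cx))(−L'(x))/L(x)² = o(m(x)²). -/
open MeasureTheory Real Filter Asymptotics

/-- Density of the log-normal distribution with parameters `μ` and `σ` on `(0, ∞)`. -/
noncomputable def lognormalPdf (μ σ : ℝ) (α : ℝ) : ℝ :=
  (1 / (α * σ * Real.sqrt (2 * Real.pi))) * Real.exp (-(Real.log α - μ) ^ 2 / (2 * σ ^ 2))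

/-- Laplace transform of the log-normal distribution. -/
noncomputable def lnLaplace (μ σ : ℝ) (x : ℝ) : ℝ :=
  ∫ α in Set.Ioi (0 : ℝ), Real.exp (-α * x) * lognormalPdf μ σ α

/-- `k`-th moment-type integral. -/
noncomputable def lnG (μ σ : ℝ) (k : ℕ) (x : ℝ) : ℝ :=
  ∫ α in Set.Ioi (0 : ℝ), α ^ k * Real.exp (-α * x) * lognormalPdf μ σ α

/-- Gaussian density value. -/
noncomputable def gaussd (μ σ z : ℝ) : ℝ :=
  (1 / (σ * Real.sqrt (2 * Real.pi))) * Real.exp (-(z - μ) ^ 2 / (2 * σ ^ 2))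

noncomputable def pdfBd (μ σ : ℝ) : ℝ :=
  (1 / (σ * Real.sqrt (2 * Real.pi))) * Real.exp (σ ^ 2 / 2 - μ)

section helpers
variable {μ σ : ℝ} (hσ : 0 < σ)

lemma sqrt2pi_pos : 0 < Real.sqrt (2 * Real.pi) :=
  Real.sqrt_pos.2 (by positivity)

include hσ

lemma pdf_pos {α : ℝ} (hα : 0 < α) : 0 < lognormalPdf μ σ α := by
  have := sqrt2pi_pos
  unfold lognormalPdf
  positivity

lemma pdf_rw {α : ℝ} (hα : 0 < α) :
    lognormalPdf μ σ α
      = (1 / (σ * Real.sqrt (2 * Real.pi)))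
        * Real.exp (-(Real.log α - μ) ^ 2 / (2 * σ ^ 2) - Real.log α) := by
  have h2 := sqrt2pi_pos
  rw [lognormalPdf, Real.exp_sub, Real.exp_log hα]
  field_simp

lemma pdf_le_bd {α : ℝ} (hα : 0 < α) : lognormalPdf μ σ α ≤ pdfBd μ σ := by
  have h2 := sqrt2pi_pos
  rw [pdf_rw hσ hα, pdfBd]
  have h3 : -(Real.log α - μ) ^ 2 / (2 * σ ^ 2) - Real.log α ≤ σ ^ 2 / 2 - μ := by
    have key : σ ^ 2 / 2 - μ - (-(Real.log α - μ) ^ 2 / (2 * σ ^ 2) - Real.log α)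
        = (Real.log α - μ + σ ^ 2) ^ 2 / (2 * σ ^ 2) := by
      field_simp
      ring
    nlinarith [sq_nonneg (Real.log α - μ + σ ^ 2), sq_nonneg σ,
      div_nonneg (sq_nonneg (Real.log α - μ + σ ^ 2)) (by positivity : (0:ℝ) ≤ 2 * σ ^ 2)]
  have := Real.exp_le_exp.2 h3
  have hpos : (0:ℝ) < 1 / (σ * Real.sqrt (2 * Real.pi)) := by positivity
  exact mul_le_mul_of_nonneg_left this hpos.le

lemma pdfBd_pos : 0 < pdfBd μ σ := by
  have := sqrt2pi_pos
  unfold pdfBd; positivity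

omit hσ

lemma mul_exp_le {u s : ℝ} (hu : 0 ≤ u) (hs : 0 < s) :
    u * Real.exp (-(s * u)) ≤ (2 / s) * Real.exp (-(s * u) / 2) := by
  have h1 : s * u / 2 ≤ Real.exp (s * u / 2) := by
    nlinarith [Real.add_one_le_exp (s * u / 2)]
  have h2 : u ≤ (2 / s) * Real.exp (s * u / 2) := by
    rw [div_mul_eq_mul_div, le_div_iff₀ hs]
    nlinarith [h1, hs]
  calc u * Real.exp (-(s * u)) ≤ ((2 / s) * Real.exp (s * u / 2)) * Real.exp (-(s * u)) :=
        mul_le_mul_of_nonneg_right h2 (Real.exp_pos _).le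
    _ = (2 / s) * Real.exp (-(s * u) / 2) := by
        rw [mul_assoc, ← Real.exp_add]; ring_nf

lemma pow_le_exp_aux (k : ℕ) {s u : ℝ} (hs : 0 < s) (hu : 0 ≤ u) :
    u ^ k ≤ (2 * k / s) ^ k * Real.exp (s * u / 2) := by
  rcases Nat.eq_zero_or_pos k with hk | hk
  · subst hk; simpa using Real.one_le_exp (by positivity)
  · have hk' : (0:ℝ) < k := by exact_mod_cast hk
    have h1 : s * u / (2 * k) ≤ Real.exp (s * u / (2 * k)) := by
      nlinarith [Real.add_one_le_exp (s * u / (2 * k))]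
    have h2 : (s * u / (2 * k)) ^ k ≤ Real.exp (s * u / (2 * k)) ^ k :=
      pow_le_pow_left₀ (by positivity) h1 k
    have h3 : Real.exp (s * u / (2 * k)) ^ k = Real.exp (s * u / 2) := by
      rw [← Real.exp_nat_mul]
      congr 1
      field_simp
    have h4 : u ^ k = (2 * k / s) ^ k * (s * u / (2 * k)) ^ k := by
      rw [← mul_pow]
      field_simp
    calc u ^ k = (2 * k / s) ^ k * (s * u / (2 * k)) ^ k := h4
      _ ≤ (2 * k / s) ^ k * Real.exp (s * u / (2 * k)) ^ k :=
        mul_le_mul_of_nonneg_left h2 (by positivity)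
      _ = (2 * k / s) ^ k * Real.exp (s * u / 2) := by rw [h3]

end helpers
section integrab
variable {μ σ : ℝ} (hσ : 0 < σ)

lemma pdf_meas : Measurable (lognormalPdf μ σ) := by
  unfold lognormalPdf
  measurability

lemma itg_meas (k : ℕ) (x : ℝ) :
    Measurable (fun α : ℝ => α ^ k * Real.exp (-α * x) * lognormalPdf μ σ α) := by
  have := pdf_meas (μ := μ) (σ := σ)
  fun_prop

include hσ

lemma integrable_itg (k : ℕ) {x : ℝ} (hx : 0 < x) :
    IntegrableOn (fun α : ℝ => α ^ k * Real.exp (-α * x) * lognormalPdf μ σ α)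
      (Set.Ioi (0:ℝ)) := by
  refine Integrable.mono'
    (g := fun α => (pdfBd μ σ * (2 * k / (x/2)) ^ k) * Real.exp (-(3 * x / 4) * α))
    (((exp_neg_integrableOn_Ioi 0 (by positivity : (0:ℝ) < 3 * x / 4)).const_mul _))
    ((itg_meas k x).aestronglyMeasurable) ?_
  rw [ae_restrict_iff' measurableSet_Ioi]
  filter_upwards with α hα
  have hα' : (0:ℝ) < α := hα
  have hnn : 0 ≤ α ^ k * Real.exp (-α * x) * lognormalPdf μ σ α := by
    have := pdf_pos hσ (μ := μ) hα'
    positivity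
  rw [Real.norm_eq_abs, abs_of_nonneg hnn]
  have h1 : lognormalPdf μ σ α ≤ pdfBd μ σ := pdf_le_bd hσ hα'
  have h2 : α ^ k ≤ (2 * k / (x/2)) ^ k * Real.exp ((x/2) * α / 2) :=
    pow_le_exp_aux k (by positivity) hα'.le
  have h3 : α ^ k * Real.exp (-α * x) * lognormalPdf μ σ α
      ≤ ((2 * k / (x/2)) ^ k * Real.exp ((x/2) * α / 2)) * Real.exp (-α * x) * pdfBd μ σ := by
    apply mul_le_mul
    · exact mul_le_mul_of_nonneg_right h2 (Real.exp_pos _).le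
    · exact h1
    · exact (pdf_pos hσ hα').le
    · positivity
  calc α ^ k * Real.exp (-α * x) * lognormalPdf μ σ α
      ≤ ((2 * k / (x/2)) ^ k * Real.exp ((x/2) * α / 2)) * Real.exp (-α * x) * pdfBd μ σ := h3
    _ = (pdfBd μ σ * (2 * k / (x/2)) ^ k) * Real.exp (-(3 * x / 4) * α) := by
        rw [mul_assoc ((2 * k / (x/2)) ^ k), ← Real.exp_add]
        ring_nf

lemma lnG_pos (k : ℕ) {x : ℝ} (hx : 0 < x) : 0 < lnG μ σ k x := by
  rw [lnG, setIntegral_pos_iff_support_of_nonneg_ae]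
  · have hsub : Set.Ioi (0:ℝ) ⊆ Function.support
        (fun α : ℝ => α ^ k * Real.exp (-α * x) * lognormalPdf μ σ α) := by
      intro α hα
      have hα' : (0:ℝ) < α := hα
      have := pdf_pos hσ (μ := μ) hα'
      exact ne_of_gt (by positivity)
    have : Function.support (fun α : ℝ => α ^ k * Real.exp (-α * x) * lognormalPdf μ σ α)
        ∩ Set.Ioi (0:ℝ) = Set.Ioi (0:ℝ) := Set.inter_eq_right.mpr hsub
    rw [this, Real.volume_Ioi]
    exact ENNReal.zero_lt_top
  · rw [EventuallyLE, ae_restrict_iff' measurableSet_Ioi]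
    filter_upwards with α hα
    have hα' : (0:ℝ) < α := hα
    have := pdf_pos hσ (μ := μ) hα'
    positivity
  · exact integrable_itg hσ k hx

lemma lnG_hasDeriv (k : ℕ) {x : ℝ} (hx : 0 < x) :
    HasDerivAt (lnG μ σ k) (-(lnG μ σ (k+1) x)) x := by
  have key := hasDerivAt_integral_of_dominated_loc_of_deriv_le
    (μ := volume.restrict (Set.Ioi (0:ℝ)))
    (F := fun y α => α ^ k * Real.exp (-α * y) * lognormalPdf μ σ α)
    (F' := fun y α => -(α ^ (k+1) * Real.exp (-α * y) * lognormalPdf μ σ α))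
    (x₀ := x)
    (bound := fun α => (pdfBd μ σ * (2 * (k+1) / (x/4)) ^ (k+1)) * Real.exp (-(x / 4) * α))
    (Metric.ball_mem_nhds x (half_pos hx))
    (Eventually.of_forall fun y => ((itg_meas k y).aestronglyMeasurable))
    (integrable_itg hσ k hx)
    (((itg_meas (k+1) x).neg).aestronglyMeasurable)
    ?_ ?_ ?_
  · have : lnG μ σ k = fun y => ∫ α in Set.Ioi (0:ℝ),
        α ^ k * Real.exp (-α * y) * lognormalPdf μ σ α := rfl
    rw [this]
    exact key.2.congr_deriv (by rw [integral_neg, lnG])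
  · -- bound
    rw [ae_restrict_iff' measurableSet_Ioi]
    filter_upwards with α hα y hy
    have hα' : (0:ℝ) < α := hα
    have hy' : x / 2 < y := by
      rw [Metric.mem_ball, Real.dist_eq, abs_lt] at hy
      linarith [hy.1]
    have hnn : 0 ≤ α ^ (k+1) * Real.exp (-α * y) * lognormalPdf μ σ α := by
      have := pdf_pos hσ (μ := μ) hα'
      positivity
    rw [norm_neg, Real.norm_eq_abs, abs_of_nonneg hnn]
    have h1 : lognormalPdf μ σ α ≤ pdfBd μ σ := pdf_le_bd hσ hα'
    have h2 : α ^ (k+1) ≤ (2 * (k+1) / (x/4)) ^ (k+1) * Real.exp ((x/4) * α / 2) := by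
      have := pow_le_exp_aux (k+1) (by positivity : (0:ℝ) < x/4) hα'.le
      convert this using 3 <;> push_cast <;> ring
    have hexp : Real.exp (-α * y) ≤ Real.exp (-α * (x/2)) := by
      apply Real.exp_le_exp.2
      nlinarith
    calc α ^ (k+1) * Real.exp (-α * y) * lognormalPdf μ σ α
        ≤ ((2 * (k+1) / (x/4)) ^ (k+1) * Real.exp ((x/4) * α / 2)) * Real.exp (-α * (x/2))
            * pdfBd μ σ := by
          apply mul_le_mul _ h1 (pdf_pos hσ hα').le (by positivity)
          exact mul_le_mul h2 hexp (Real.exp_pos _).le (by positivity)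
      _ = (pdfBd μ σ * (2 * (k+1) / (x/4)) ^ (k+1))
            * Real.exp ((x/4) * α / 2 + -α * (x/2)) := by
          rw [mul_assoc ((2 * (k+1) / (x/4)) ^ (k+1)), ← Real.exp_add]
          ring
      _ ≤ (pdfBd μ σ * (2 * (k+1) / (x/4)) ^ (k+1)) * Real.exp (-(x / 4) * α) := by
          refine mul_le_mul_of_nonneg_left (Real.exp_le_exp.2 (by nlinarith)) ?_
          exact mul_nonneg (pdfBd_pos hσ).le (by positivity)
  · exact (exp_neg_integrableOn_Ioi 0 (by positivity : (0:ℝ) < x/4)).const_mul _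
  · -- differentiability
    rw [ae_restrict_iff' measurableSet_Ioi]
    filter_upwards with α hα y hy
    have hd : HasDerivAt (fun y : ℝ => Real.exp (-α * y)) (Real.exp (-α * y) * (-α)) y := by
      have : HasDerivAt (fun y : ℝ => -α * y) (-α) y := by
        simpa using (hasDerivAt_id y).const_mul (-α)
      exact this.exp
    have := (hd.const_mul (α ^ k)).mul_const (lognormalPdf μ σ α)
    exact this.congr_deriv (by ring)

end integrab
section derivs
variable {μ σ : ℝ} (hσ : 0 < σ)

lemma lnLaplace_eq_lnG : lnLaplace μ σ = lnG μ σ 0 := by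
  funext x
  simp [lnLaplace, lnG]

include hσ

lemma derivL {x : ℝ} (hx : 0 < x) :
    deriv (lnLaplace μ σ) x = -(lnG μ σ 1 x) := by
  rw [lnLaplace_eq_lnG]
  exact (lnG_hasDeriv hσ 0 hx).deriv

lemma deriv2L {x : ℝ} (hx : 0 < x) :
    deriv (deriv (lnLaplace μ σ)) x = lnG μ σ 2 x := by
  have hev : deriv (lnLaplace μ σ) =ᶠ[nhds x] (fun y => -(lnG μ σ 1 y)) := by
    filter_upwards [isOpen_Ioi.mem_nhds (Set.mem_Ioi.2 hx)] with y hy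
    exact derivL hσ hy
  rw [hev.deriv_eq, show (fun y => -(lnG μ σ 1 y)) = -lnG μ σ 1 from rfl, deriv.neg,
    (lnG_hasDeriv hσ 1 hx).deriv, neg_neg]

-- B1
lemma bound1 {c x : ℝ} (hc : 1 < c) (hx : 0 < x) :
    lnG μ σ 2 (c * x) ≤ (2 / ((c - 1) * x)) * lnG μ σ 1 x := by
  have hc0 : (0:ℝ) < c := by linarith
  have hcx : 0 < c * x := by positivity
  have hs : (0:ℝ) < (c - 1) * x := by nlinarith
  rw [lnG, lnG, ← integral_const_mul]
  apply setIntegral_mono_on (integrable_itg hσ 2 hcx)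
    (((integrable_itg hσ 1 hx)).const_mul _) measurableSet_Ioi
  intro α hα
  have hα' : (0:ℝ) < α := hα
  have hpdf := pdf_pos hσ (μ := μ) hα'
  have key : α * Real.exp (-(((c - 1) * x) * α)) ≤ 2 / ((c - 1) * x) := by
    calc α * Real.exp (-(((c - 1) * x) * α))
        ≤ (2 / ((c - 1) * x)) * Real.exp (-(((c - 1) * x) * α) / 2) := mul_exp_le hα'.le hs
      _ ≤ (2 / ((c - 1) * x)) * 1 := by
          refine mul_le_mul_of_nonneg_left ?_ (by positivity)
          rw [Real.exp_le_one_iff]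
          nlinarith
      _ = 2 / ((c - 1) * x) := mul_one _
  have hsplit : α ^ 2 * Real.exp (-α * (c * x)) * lognormalPdf μ σ α
      = (α * Real.exp (-(((c - 1) * x) * α)))
        * (α ^ 1 * Real.exp (-α * x) * lognormalPdf μ σ α) := by
    rw [show -α * (c * x) = (-(((c - 1) * x) * α)) + (-α * x) by ring, Real.exp_add]
    ring
  rw [hsplit]
  exact mul_le_mul_of_nonneg_right key (by positivity)

-- B2
lemma bound2 {c x δ : ℝ} (hc : 1 < c) (hx : 0 < x) (hδ : 0 < δ) :
    lnG μ σ 1 (c * x)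
      ≤ Real.exp (-((c - 1) * δ * x)) * lnG μ σ 1 x + δ * lnG μ σ 0 x := by
  have hc0 : (0:ℝ) < c := by linarith
  have hcx : 0 < c * x := by positivity
  rw [lnG, lnG, lnG, ← integral_const_mul, ← integral_const_mul, ← integral_add
    (((integrable_itg hσ 1 hx)).const_mul _) (((integrable_itg hσ 0 hx)).const_mul _)]
  apply setIntegral_mono_on (integrable_itg hσ 1 hcx) ?_ measurableSet_Ioi
  · intro α hα
    have hα' : (0:ℝ) < α := hα
    have hpdf := pdf_pos hσ (μ := μ) hα'
    simp only [pow_one, pow_zero, one_mul]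
    rcases le_total δ α with h | h
    · have h1 : α * Real.exp (-α * (c * x)) * lognormalPdf μ σ α
          ≤ Real.exp (-((c - 1) * δ * x)) * (α * Real.exp (-α * x) * lognormalPdf μ σ α) := by
        rw [show -α * (c * x) = (-((c-1) * α * x)) + (-α * x) by ring, Real.exp_add]
        have hee : Real.exp (-((c-1) * α * x)) ≤ Real.exp (-((c - 1) * δ * x)) := by
          apply Real.exp_le_exp.2
          nlinarith [mul_nonneg (mul_nonneg (by linarith : (0:ℝ) ≤ c - 1) hx.le)
            (by linarith : (0:ℝ) ≤ α - δ)]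
        have h0 : α * (Real.exp (-((c-1) * α * x)) * Real.exp (-α * x)) * lognormalPdf μ σ α
            = Real.exp (-((c-1) * α * x)) * (α * Real.exp (-α * x) * lognormalPdf μ σ α) := by
          ring
        rw [h0]
        exact mul_le_mul_of_nonneg_right hee (by positivity)
      have h2 : 0 ≤ δ * (Real.exp (-α * x) * lognormalPdf μ σ α) := by positivity
      linarith
    · have h1 : α * Real.exp (-α * (c * x)) * lognormalPdf μ σ α
          ≤ δ * (Real.exp (-α * x) * lognormalPdf μ σ α) := by
        have hee : Real.exp (-α * (c * x)) ≤ Real.exp (-α * x) := by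
          apply Real.exp_le_exp.2
          nlinarith [mul_nonneg hα'.le (mul_nonneg (by linarith : (0:ℝ) ≤ c - 1) hx.le)]
        have := mul_le_mul h (mul_le_mul_of_nonneg_right hee hpdf.le)
          (by positivity) hδ.le
        linarith [this]
      have h2 : 0 ≤ Real.exp (-((c - 1) * δ * x)) * (α * Real.exp (-α * x) * lognormalPdf μ σ α) := by
        positivity
      linarith
  · exact Integrable.add (((integrable_itg hσ 1 hx)).const_mul _)
      (((integrable_itg hσ 0 hx)).const_mul _)

end derivs
section core
variable {μ σ : ℝ} (hσ : 0 < σ)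

lemma lnG_zero_eq (x : ℝ) :
    lnG μ σ 0 x = ∫ α in Set.Ioi (0:ℝ), Real.exp (-α * x) * lognormalPdf μ σ α := by
  simp [lnG]

lemma rpow_integrableOn {a b : ℝ} (ha : 0 < a) (hb : 0 < b) :
    IntegrableOn (fun α : ℝ => α ^ (b - 1)) (Set.Ioc (0:ℝ) a) :=
  (intervalIntegral.intervalIntegrable_rpow' (by linarith : (-1:ℝ) < b - 1)).1

lemma rpow_integral_Ioc {a b : ℝ} (ha : 0 < a) (hb : 0 < b) :
    ∫ α in Set.Ioc (0:ℝ) a, α ^ (b - 1) = a ^ b / b := by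
  rw [← intervalIntegral.integral_of_le ha.le,
    integral_rpow (Or.inl (by linarith : (-1:ℝ) < b - 1))]
  rw [show b - 1 + 1 = b by ring, Real.zero_rpow hb.ne']
  ring

include hσ

lemma integrable0' {x : ℝ} (hx : 0 < x) :
    IntegrableOn (fun α : ℝ => Real.exp (-α * x) * lognormalPdf μ σ α) (Set.Ioi (0:ℝ)) := by
  have := integrable_itg (μ := μ) (σ := σ) hσ 0 hx
  simpa using this

lemma gaussd_pos (z : ℝ) : 0 < gaussd μ σ z := by
  have := sqrt2pi_pos
  unfold gaussd; positivity

/-- Pointwise tail domination of the lognormal pdf. -/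
lemma pdf_le_tail {a α : ℝ} (ha : 0 < a) (hz : Real.log a < μ) (hα : α ∈ Set.Ioc (0:ℝ) a) :
    lognormalPdf μ σ α
      ≤ (gaussd μ σ (Real.log a) * a ^ (-((μ - Real.log a) / σ ^ 2)))
          * α ^ ((μ - Real.log a) / σ ^ 2 - 1) := by
  obtain ⟨hα0, hαa⟩ := hα
  set z := Real.log a with hzdef
  set b := (μ - z) / σ ^ 2 with hbdef
  have hb : 0 < b := by
    have : 0 < μ - z := by linarith
    positivity
  set u := Real.log α with hudef
  have hrw1 : (a : ℝ) ^ (-b) = Real.exp (Real.log a * (-b)) :=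
    Real.rpow_def_of_pos ha _
  have hrw2 : (α : ℝ) ^ (b - 1) = Real.exp (Real.log α * (b - 1)) :=
    Real.rpow_def_of_pos hα0 _
  rw [pdf_rw hσ hα0, gaussd, hrw1, hrw2, mul_assoc, mul_assoc, ← Real.exp_add, ← Real.exp_add]
  have hexp : -(u - μ) ^ 2 / (2 * σ ^ 2) - u
      ≤ -(z - μ) ^ 2 / (2 * σ ^ 2) + (z * (-b) + u * (b - 1)) := by
    have hid : (-(z - μ) ^ 2 / (2 * σ ^ 2) + (z * (-b) + u * (b - 1)))
        - (-(u - μ) ^ 2 / (2 * σ ^ 2) - u) = (u - z) ^ 2 / (2 * σ ^ 2) := by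
      rw [hbdef]
      field_simp
      ring
    nlinarith [div_nonneg (sq_nonneg (u - z)) (by positivity : (0:ℝ) ≤ 2 * σ ^ 2)]
  exact mul_le_mul_of_nonneg_left (Real.exp_le_exp.2 hexp) (by positivity)

lemma pdf_integrableOn_Ioc {a : ℝ} (ha : 0 < a) (hz : Real.log a < μ) :
    IntegrableOn (lognormalPdf μ σ) (Set.Ioc (0:ℝ) a) := by
  set b := (μ - Real.log a) / σ ^ 2 with hbdef
  have hb : 0 < b := by
    have : 0 < μ - Real.log a := by linarith
    positivity
  refine Integrable.mono'
    ((rpow_integrableOn ha hb).const_mul (gaussd μ σ (Real.log a) * a ^ (-b)))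
    (pdf_meas (μ := μ) (σ := σ)).aestronglyMeasurable ?_
  rw [ae_restrict_iff' measurableSet_Ioc]
  filter_upwards with α hα
  rw [Real.norm_eq_abs, abs_of_nonneg (pdf_pos hσ hα.1).le]
  exact pdf_le_tail hσ ha hz hα

lemma tail_bound {a : ℝ} (ha : 0 < a) (hz : Real.log a < μ) :
    ∫ α in Set.Ioc (0:ℝ) a, lognormalPdf μ σ α
      ≤ σ ^ 2 / (μ - Real.log a) * gaussd μ σ (Real.log a) := by
  set b := (μ - Real.log a) / σ ^ 2 with hbdef
  have hb : 0 < b := by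
    have : 0 < μ - Real.log a := by linarith
    positivity
  have step1 : ∫ α in Set.Ioc (0:ℝ) a, lognormalPdf μ σ α
      ≤ ∫ α in Set.Ioc (0:ℝ) a,
          (gaussd μ σ (Real.log a) * a ^ (-b)) * α ^ (b - 1) := by
    apply setIntegral_mono_on (pdf_integrableOn_Ioc hσ ha hz)
      ((rpow_integrableOn ha hb).const_mul _) measurableSet_Ioc
    intro α hα
    exact pdf_le_tail hσ ha hz hα
  have step2 : ∫ α in Set.Ioc (0:ℝ) a,
      (gaussd μ σ (Real.log a) * a ^ (-b)) * α ^ (b - 1)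
      = σ ^ 2 / (μ - Real.log a) * gaussd μ σ (Real.log a) := by
    rw [integral_const_mul, rpow_integral_Ioc ha hb]
    have h1 : (a:ℝ) ^ (-b) * (a ^ b / b) = 1 / b := by
      rw [div_eq_mul_inv, ← mul_assoc, ← Real.rpow_add ha]
      simp
    calc gaussd μ σ (Real.log a) * a ^ (-b) * (a ^ b / b)
        = gaussd μ σ (Real.log a) * (1 / b) := by rw [mul_assoc, h1]
      _ = σ ^ 2 / (μ - Real.log a) * gaussd μ σ (Real.log a) := by
          rw [hbdef, one_div_div]; ring
  linarith [step1, step2.le]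

end core
section core2
variable {μ σ : ℝ} (hσ : 0 < σ)

include hσ

lemma piece_A {x K : ℝ} (hx : 0 < x) (hK : 0 < K) :
    K * ∫ α in Set.Ioi (K/x), Real.exp (-α * x) * lognormalPdf μ σ α
      ≤ x * lnG μ σ 1 x := by
  have ha : 0 < K / x := div_pos hK hx
  have hsub : Set.Ioi (K/x) ⊆ Set.Ioi (0:ℝ) := Set.Ioi_subset_Ioi ha.le
  have hint0 : IntegrableOn (fun α : ℝ => Real.exp (-α * x) * lognormalPdf μ σ α)
      (Set.Ioi (K/x)) := (integrable0' hσ hx).mono_set hsub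
  have hint1 : IntegrableOn (fun α : ℝ => α ^ 1 * Real.exp (-α * x) * lognormalPdf μ σ α)
      (Set.Ioi (K/x)) := (integrable_itg hσ 1 hx).mono_set hsub
  rw [← integral_const_mul]
  have step1 : ∫ α in Set.Ioi (K/x), K * (Real.exp (-α * x) * lognormalPdf μ σ α)
      ≤ ∫ α in Set.Ioi (K/x), x * (α ^ 1 * Real.exp (-α * x) * lognormalPdf μ σ α) := by
    apply setIntegral_mono_on (hint0.const_mul _) (hint1.const_mul _) measurableSet_Ioi
    intro α hα
    have hα' : K / x < α := hα
    have hxα : K ≤ x * α := by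
      rw [div_lt_iff₀ hx] at hα'
      nlinarith
    have hpos : 0 ≤ Real.exp (-α * x) * lognormalPdf μ σ α :=
      mul_nonneg (Real.exp_pos _).le (pdf_pos hσ (by linarith [ha] : (0:ℝ) < α)).le
    calc K * (Real.exp (-α * x) * lognormalPdf μ σ α)
        ≤ (x * α) * (Real.exp (-α * x) * lognormalPdf μ σ α) :=
          mul_le_mul_of_nonneg_right hxα hpos
      _ = x * (α ^ 1 * Real.exp (-α * x) * lognormalPdf μ σ α) := by ring
  have step2 : ∫ α in Set.Ioi (K/x), x * (α ^ 1 * Real.exp (-α * x) * lognormalPdf μ σ α)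
      ≤ x * lnG μ σ 1 x := by
    rw [integral_const_mul, lnG]
    apply mul_le_mul_of_nonneg_left ?_ hx.le
    apply setIntegral_mono_set (integrable_itg hσ 1 hx) ?_ (HasSubset.Subset.eventuallyLE hsub)
    rw [EventuallyLE, ae_restrict_iff' measurableSet_Ioi]
    filter_upwards with α hα
    have hα0 : (0:ℝ) < α := hα
    have hp := pdf_pos hσ (μ := μ) hα0
    simp only [Pi.zero_apply]
    exact le_of_lt (mul_pos (mul_pos (pow_pos hα0 1) (Real.exp_pos _)) hp)
  linarith

lemma piece_B {x K : ℝ} (hx : 0 < x) (hK : 0 < K) (h2 : Real.log (2 * (K/x)) ≤ μ) :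
    K * Real.exp (-(2*K)) * gaussd μ σ (Real.log (K/x))
      ≤ x * lnG μ σ 1 x := by
  have := sqrt2pi_pos
  set a := K / x with hadef
  have ha : 0 < a := div_pos hK hx
  have hsub : Set.Icc a (2*a) ⊆ Set.Ioi (0:ℝ) := fun t ht => lt_of_lt_of_le ha ht.1
  have hlow : ∀ α ∈ Set.Icc a (2*a),
      Real.exp (-(2*K)) * gaussd μ σ (Real.log a)
        ≤ α ^ 1 * Real.exp (-α * x) * lognormalPdf μ σ α := by
    intro α hα
    have hα0 : (0:ℝ) < α := hsub hα
    have hf : α ^ 1 * Real.exp (-α * x) * lognormalPdf μ σ α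
        = (1 / (σ * Real.sqrt (2 * Real.pi)))
          * Real.exp (-(Real.log α - μ) ^ 2 / (2 * σ ^ 2)) * Real.exp (-α * x) := by
      rw [lognormalPdf]
      field_simp
    rw [hf, gaussd]
    have hloga : Real.log a ≤ Real.log α := Real.log_le_log ha hα.1
    have hlogα : Real.log α ≤ μ := by
      calc Real.log α ≤ Real.log (2*a) := Real.log_le_log hα0 hα.2
        _ ≤ μ := h2
    have hsq : (Real.log α - μ) ^ 2 ≤ (Real.log a - μ) ^ 2 := by nlinarith
    have hexp1 : Real.exp (-(Real.log a - μ) ^ 2 / (2 * σ ^ 2))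
        ≤ Real.exp (-(Real.log α - μ) ^ 2 / (2 * σ ^ 2)) := by
      apply Real.exp_le_exp.2
      have h2σ : (0:ℝ) < 2 * σ ^ 2 := by positivity
      rw [div_le_div_iff₀ h2σ h2σ]
      nlinarith
    have hexp2 : Real.exp (-(2*K)) ≤ Real.exp (-α * x) := by
      apply Real.exp_le_exp.2
      have : α * x ≤ 2 * K := by
        have := hα.2
        calc α * x ≤ (2 * a) * x := by nlinarith
          _ = 2 * K := by rw [hadef]; field_simp
      linarith
    calc Real.exp (-(2*K)) * ((1 / (σ * Real.sqrt (2 * Real.pi)))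
          * Real.exp (-(Real.log a - μ) ^ 2 / (2 * σ ^ 2)))
        ≤ Real.exp (-α * x) * ((1 / (σ * Real.sqrt (2 * Real.pi)))
          * Real.exp (-(Real.log α - μ) ^ 2 / (2 * σ ^ 2))) := by
          apply mul_le_mul hexp2 (mul_le_mul_of_nonneg_left hexp1 (by positivity))
            (by positivity) (Real.exp_pos _).le
      _ = (1 / (σ * Real.sqrt (2 * Real.pi)))
          * Real.exp (-(Real.log α - μ) ^ 2 / (2 * σ ^ 2)) * Real.exp (-α * x) := by ring
  have hconst : Real.exp (-(2*K)) * gaussd μ σ (Real.log a) * a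
      ≤ ∫ α in Set.Icc a (2*a), α ^ 1 * Real.exp (-α * x) * lognormalPdf μ σ α := by
    have hci : ∫ α in Set.Icc a (2*a),
        (Real.exp (-(2*K)) * gaussd μ σ (Real.log a))
        = Real.exp (-(2*K)) * gaussd μ σ (Real.log a) * a := by
      rw [setIntegral_const, Real.volume_real_Icc_of_le (by linarith), smul_eq_mul]
      ring
    rw [← hci]
    apply setIntegral_mono_on (integrableOn_const measure_Icc_lt_top.ne)
      ((integrable_itg hσ 1 hx).mono_set hsub) measurableSet_Icc hlow
  have hrest : ∫ α in Set.Icc a (2*a), α ^ 1 * Real.exp (-α * x) * lognormalPdf μ σ α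
      ≤ lnG μ σ 1 x := by
    rw [lnG]
    apply setIntegral_mono_set (integrable_itg hσ 1 hx) ?_ (HasSubset.Subset.eventuallyLE hsub)
    rw [EventuallyLE, ae_restrict_iff' measurableSet_Ioi]
    filter_upwards with α hα
    have hα0 : (0:ℝ) < α := hα
    have hp := pdf_pos hσ (μ := μ) hα0
    simp only [Pi.zero_apply]
    exact le_of_lt (mul_pos (mul_pos (pow_pos hα0 1) (Real.exp_pos _)) hp)
  have final : K * Real.exp (-(2*K)) * gaussd μ σ (Real.log a)
      = x * (Real.exp (-(2*K)) * gaussd μ σ (Real.log a) * a) := by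
    rw [hadef]
    field_simp
  rw [final]
  calc x * (Real.exp (-(2*K)) * gaussd μ σ (Real.log a) * a)
      ≤ x * ∫ α in Set.Icc a (2*a), α ^ 1 * Real.exp (-α * x) * lognormalPdf μ σ α :=
        mul_le_mul_of_nonneg_left hconst hx.le
    _ ≤ x * lnG μ σ 1 x := mul_le_mul_of_nonneg_left hrest hx.le

lemma g0_split {x a : ℝ} (hx : 0 < x) (ha : 0 < a) :
    lnG μ σ 0 x = (∫ α in Set.Ioc (0:ℝ) a, Real.exp (-α * x) * lognormalPdf μ σ α)
      + ∫ α in Set.Ioi a, Real.exp (-α * x) * lognormalPdf μ σ α := by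
  rw [lnG_zero_eq, ← Set.Ioc_union_Ioi_eq_Ioi ha.le]
  rw [setIntegral_union (Set.Ioc_disjoint_Ioi le_rfl) measurableSet_Ioi
    ((integrable0' hσ hx).mono_set (by rw [← Set.Ioc_union_Ioi_eq_Ioi ha.le]; exact Set.subset_union_left))
    ((integrable0' hσ hx).mono_set (by rw [← Set.Ioc_union_Ioi_eq_Ioi ha.le]; exact Set.subset_union_right))]

lemma core_tendsto : Tendsto (fun x => x * lnG μ σ 1 x / lnG μ σ 0 x) atTop atTop := by
  rw [tendsto_atTop]
  intro b
  set K := 2 * max b 1 with hKdef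
  have hmax : (1:ℝ) ≤ max b 1 := le_max_right b 1
  have hK : 0 < K := by rw [hKdef]; linarith
  have hbK : b ≤ K / 2 := by rw [hKdef]; simp [le_max_left]
  filter_upwards [eventually_gt_atTop (0:ℝ),
    eventually_ge_atTop (Real.exp (Real.log (2*K) - μ)),
    eventually_ge_atTop (Real.exp (σ^2 * Real.exp (2*K) + Real.log K - μ))] with x hx h1 h2
  set a := K / x with hadef
  have ha : 0 < a := div_pos hK hx
  have hlogx1 : Real.log (2*K) - μ ≤ Real.log x := by
    rw [← Real.log_exp (Real.log (2*K) - μ)]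
    exact Real.log_le_log (Real.exp_pos _) h1
  have hlogx2 : σ^2 * Real.exp (2*K) + Real.log K - μ ≤ Real.log x := by
    rw [← Real.log_exp (σ^2 * Real.exp (2*K) + Real.log K - μ)]
    exact Real.log_le_log (Real.exp_pos _) h2
  have hlog1 : Real.log (2 * a) ≤ μ := by
    rw [hadef, show 2 * (K/x) = (2*K)/x by ring, Real.log_div (by positivity) hx.ne']
    have : Real.log (2 * K) = Real.log (2*K) := rfl
    linarith
  have hμz : σ^2 * Real.exp (2*K) ≤ μ - Real.log a := by
    rw [hadef, Real.log_div hK.ne' hx.ne']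
    linarith
  have hz : Real.log a < μ := by
    have h0 : 0 < σ^2 * Real.exp (2*K) := by positivity
    linarith
  -- tail chain
  have t1 : ∫ α in Set.Ioc (0:ℝ) a, Real.exp (-α * x) * lognormalPdf μ σ α
      ≤ ∫ α in Set.Ioc (0:ℝ) a, lognormalPdf μ σ α := by
    apply setIntegral_mono_on
      ((integrable0' hσ hx).mono_set Set.Ioc_subset_Ioi_self)
      (pdf_integrableOn_Ioc hσ ha hz) measurableSet_Ioc
    intro α hα
    have hpdf := (pdf_pos hσ (μ := μ) hα.1).le
    have hexp : Real.exp (-α * x) ≤ 1 := by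
      rw [Real.exp_le_one_iff]
      nlinarith [hα.1, hx]
    nlinarith
  have t2 := tail_bound hσ ha hz
  have t3 : σ ^ 2 / (μ - Real.log a) ≤ Real.exp (-(2*K)) := by
    have hpos : 0 < μ - Real.log a := by
      have h0 : 0 < σ^2 * Real.exp (2*K) := by positivity
      linarith
    rw [div_le_iff₀ hpos]
    have hid : Real.exp (-(2*K)) * (σ^2 * Real.exp (2*K)) = σ^2 := by
      rw [← mul_assoc, mul_comm (Real.exp (-(2*K))), mul_assoc, ← Real.exp_add]
      simp
    calc σ^2 = Real.exp (-(2*K)) * (σ^2 * Real.exp (2*K)) := hid.symm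
      _ ≤ Real.exp (-(2*K)) * (μ - Real.log a) :=
          mul_le_mul_of_nonneg_left hμz (Real.exp_pos _).le
  have tail_piece : K * ∫ α in Set.Ioc (0:ℝ) a, Real.exp (-α * x) * lognormalPdf μ σ α
      ≤ x * lnG μ σ 1 x := by
    have hgd := (gaussd_pos hσ (μ := μ) (Real.log a)).le
    have c1 : ∫ α in Set.Ioc (0:ℝ) a, Real.exp (-α * x) * lognormalPdf μ σ α
        ≤ Real.exp (-(2*K)) * gaussd μ σ (Real.log a) := by
      calc ∫ α in Set.Ioc (0:ℝ) a, Real.exp (-α * x) * lognormalPdf μ σ α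
          ≤ σ ^ 2 / (μ - Real.log a) * gaussd μ σ (Real.log a) := le_trans t1 t2
        _ ≤ Real.exp (-(2*K)) * gaussd μ σ (Real.log a) :=
            mul_le_mul_of_nonneg_right t3 hgd
    calc K * ∫ α in Set.Ioc (0:ℝ) a, Real.exp (-α * x) * lognormalPdf μ σ α
        ≤ K * (Real.exp (-(2*K)) * gaussd μ σ (Real.log a)) :=
          mul_le_mul_of_nonneg_left c1 hK.le
      _ = K * Real.exp (-(2*K)) * gaussd μ σ (Real.log a) := by ring
      _ ≤ x * lnG μ σ 1 x := piece_B hσ hx hK hlog1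
  have main_piece := piece_A (μ := μ) (σ := σ) hσ (K := K) hx hK
  have hsum : K * lnG μ σ 0 x ≤ 2 * (x * lnG μ σ 1 x) := by
    rw [g0_split hσ hx ha]
    have : K * ((∫ α in Set.Ioc (0:ℝ) a, Real.exp (-α * x) * lognormalPdf μ σ α)
        + ∫ α in Set.Ioi a, Real.exp (-α * x) * lognormalPdf μ σ α)
        = K * (∫ α in Set.Ioc (0:ℝ) a, Real.exp (-α * x) * lognormalPdf μ σ α)
          + K * ∫ α in Set.Ioi a, Real.exp (-α * x) * lognormalPdf μ σ α := by ring
    rw [this, hadef]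
    rw [hadef] at tail_piece
    linarith [tail_piece, main_piece]
  have hg0 := lnG_pos hσ (μ := μ) 0 hx
  rw [le_div_iff₀ hg0]
  have : b * lnG μ σ 0 x ≤ (K/2) * lnG μ σ 0 x :=
    mul_le_mul_of_nonneg_right hbK hg0.le
  linarith

end core2
/-- For every `c > 1`, as `x → ∞`: `L''(cx)/L(x) = o(m(x)²)` and
`(−L'(cx))(−L'(x))/L(x)² = o(m(x)²)`, where `m(x) = −L'(x)/L(x)`. -/
theorem lognormal_laplace_cross_scales_littleO (μ σ : ℝ) (hσ : 0 < σ) (c : ℝ) (hc : 1 < c) :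
    (fun x : ℝ => deriv (deriv (lnLaplace μ σ)) (c * x) / lnLaplace μ σ x)
        =o[atTop] (fun x : ℝ => (-(deriv (lnLaplace μ σ) x) / lnLaplace μ σ x) ^ 2) ∧
    (fun x : ℝ =>
        (-(deriv (lnLaplace μ σ) (c * x))) * (-(deriv (lnLaplace μ σ) x)) /
          (lnLaplace μ σ x) ^ 2)
        =o[atTop] (fun x : ℝ => (-(deriv (lnLaplace μ σ) x) / lnLaplace μ σ x) ^ 2) := by
  have hc0 : (0:ℝ) < c := by linarith
  have hc1 : (0:ℝ) < c - 1 := by linarith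
  set r : ℝ → ℝ := fun x => x * lnG μ σ 1 x / lnG μ σ 0 x with hrdef
  have hr : Tendsto r atTop atTop := core_tendsto hσ
  have hsqrt : Tendsto Real.sqrt atTop atTop := by
    have h : Real.sqrt = fun x : ℝ => x ^ (1/2 : ℝ) := funext fun x => Real.sqrt_eq_rpow x
    rw [h]
    exact tendsto_rpow_atTop (by norm_num)
  have hsr : Tendsto (fun x => Real.sqrt (r x)) atTop atTop := hsqrt.comp hr
  -- eventual equalities with lnG
  have hfeq1 : (fun x : ℝ => deriv (deriv (lnLaplace μ σ)) (c * x) / lnLaplace μ σ x)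
      =ᶠ[atTop] (fun x => lnG μ σ 2 (c * x) / lnG μ σ 0 x) := by
    filter_upwards [eventually_gt_atTop (0:ℝ)] with x hx
    rw [deriv2L hσ (mul_pos hc0 hx), lnLaplace_eq_lnG]
  have hfeq2 : (fun x : ℝ => (-(deriv (lnLaplace μ σ) (c * x))) * (-(deriv (lnLaplace μ σ) x))
        / (lnLaplace μ σ x) ^ 2)
      =ᶠ[atTop] (fun x => lnG μ σ 1 (c * x) * lnG μ σ 1 x / (lnG μ σ 0 x) ^ 2) := by
    filter_upwards [eventually_gt_atTop (0:ℝ)] with x hx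
    rw [derivL hσ (mul_pos hc0 hx), derivL hσ hx, lnLaplace_eq_lnG, neg_neg, neg_neg]
  have hGeq : (fun x : ℝ => (-(deriv (lnLaplace μ σ) x) / lnLaplace μ σ x) ^ 2)
      =ᶠ[atTop] (fun x => (lnG μ σ 1 x / lnG μ σ 0 x) ^ 2) := by
    filter_upwards [eventually_gt_atTop (0:ℝ)] with x hx
    rw [derivL hσ hx, lnLaplace_eq_lnG, neg_neg]
  have hvac : ∀ᶠ x : ℝ in atTop, (lnG μ σ 1 x / lnG μ σ 0 x) ^ 2 = 0
      → (fun _ : ℝ => (0:ℝ)) x = 0 ∨ True := Eventually.of_forall (fun _ _ => Or.inr trivial)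
  constructor
  · -- first claim
    have key1 : Tendsto (fun x => lnG μ σ 2 (c*x) * lnG μ σ 0 x / (lnG μ σ 1 x)^2)
        atTop (nhds 0) := by
      apply squeeze_zero' (g := fun x => (2/(c-1)) / r x)
      · filter_upwards [eventually_gt_atTop (0:ℝ)] with x hx
        have h0 := lnG_pos hσ (μ := μ) 0 hx
        have h2 := lnG_pos hσ (μ := μ) 2 (mul_pos hc0 hx)
        positivity
      · filter_upwards [eventually_gt_atTop (0:ℝ)] with x hx
        have h0 := lnG_pos hσ (μ := μ) 0 hx
        have h1 := lnG_pos hσ (μ := μ) 1 hx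
        have hb := bound1 (μ := μ) (σ := σ) hσ hc hx
        have e1 : ((2/((c-1)*x)) * lnG μ σ 1 x) * lnG μ σ 0 x / (lnG μ σ 1 x)^2
            = (2/(c-1)) / r x := by
          have hrx : r x = x * lnG μ σ 1 x / lnG μ σ 0 x := rfl
          rw [hrx]
          field_simp
        calc lnG μ σ 2 (c*x) * lnG μ σ 0 x / (lnG μ σ 1 x)^2
            ≤ ((2/((c-1)*x)) * lnG μ σ 1 x) * lnG μ σ 0 x / (lnG μ σ 1 x)^2 := by
              gcongr
          _ = (2/(c-1)) / r x := e1
      · exact Tendsto.div_atTop tendsto_const_nhds hr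
    have lo1 : (fun x => lnG μ σ 2 (c*x) / lnG μ σ 0 x)
        =o[atTop] (fun x => (lnG μ σ 1 x / lnG μ σ 0 x)^2) := by
      apply isLittleO_of_tendsto'
      · filter_upwards [eventually_gt_atTop (0:ℝ)] with x hx hzero
        exfalso
        have h0 := lnG_pos hσ (μ := μ) 0 hx
        have h1 := lnG_pos hσ (μ := μ) 1 hx
        exact (pow_ne_zero 2 (div_ne_zero h1.ne' h0.ne')) hzero
      · apply Tendsto.congr' ?_ key1
        filter_upwards [eventually_gt_atTop (0:ℝ)] with x hx
        have h0 := (lnG_pos hσ (μ := μ) 0 hx).ne'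
        have h1 := (lnG_pos hσ (μ := μ) 1 hx).ne'
        field_simp
    exact lo1.congr' hfeq1.symm hGeq.symm
  · -- second claim
    have key2 : Tendsto (fun x => lnG μ σ 1 (c*x) / lnG μ σ 1 x) atTop (nhds 0) := by
      apply squeeze_zero'
        (g := fun x => Real.exp (-((c-1) * Real.sqrt (r x))) + 1 / Real.sqrt (r x))
      · filter_upwards [eventually_gt_atTop (0:ℝ)] with x hx
        have h1 := lnG_pos hσ (μ := μ) 1 hx
        have h1c := lnG_pos hσ (μ := μ) 1 (mul_pos hc0 hx)
        positivity
      · filter_upwards [eventually_gt_atTop (0:ℝ)] with x hx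
        have h0 := lnG_pos hσ (μ := μ) 0 hx
        have h1 := lnG_pos hσ (μ := μ) 1 hx
        have hrx : r x = x * lnG μ σ 1 x / lnG μ σ 0 x := rfl
        have hrpos : 0 < r x := div_pos (mul_pos hx h1) h0
        have keyeq : ∀ a b : ℝ, 0 ≤ a → 0 ≤ b → a^2 = b^2 → a = b := by
          intro a b ha hb h
          rw [← Real.sqrt_sq ha, h, Real.sqrt_sq hb]
        set δ : ℝ := Real.sqrt (lnG μ σ 1 x / (x * lnG μ σ 0 x)) with hδdef
        have hδpos : 0 < δ := Real.sqrt_pos.2 (by positivity)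
        have hb2 := bound2 (μ := μ) (σ := σ) hσ hc hx hδpos
        have hδarg : 0 ≤ lnG μ σ 1 x / (x * lnG μ σ 0 x) :=
          le_of_lt (div_pos h1 (mul_pos hx h0))
        have iden1 : δ * x = Real.sqrt (r x) := by
          apply keyeq _ _ (mul_nonneg (by rw [hδdef]; exact Real.sqrt_nonneg _) hx.le)
            (Real.sqrt_nonneg _)
          rw [mul_pow, hδdef, Real.sq_sqrt hδarg, Real.sq_sqrt hrpos.le, hrx]
          field_simp
        have iden2 : δ * lnG μ σ 0 x = (1 / Real.sqrt (r x)) * lnG μ σ 1 x := by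
          apply keyeq _ _ (mul_nonneg (by rw [hδdef]; exact Real.sqrt_nonneg _) h0.le)
            (mul_nonneg (div_nonneg zero_le_one (Real.sqrt_nonneg _)) h1.le)
          rw [mul_pow, mul_pow, hδdef, Real.sq_sqrt hδarg, div_pow, one_pow,
            Real.sq_sqrt hrpos.le, hrx]
          have hsq1 : Real.sqrt (r x) ≠ 0 := ne_of_gt (Real.sqrt_pos.2 hrpos)
          field_simp
        rw [div_le_iff₀ h1, add_mul]
        calc lnG μ σ 1 (c*x)
            ≤ Real.exp (-((c-1) * δ * x)) * lnG μ σ 1 x + δ * lnG μ σ 0 x := hb2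
          _ = Real.exp (-((c-1) * Real.sqrt (r x))) * lnG μ σ 1 x
              + 1 / Real.sqrt (r x) * lnG μ σ 1 x := by
              rw [iden2, show (c-1) * δ * x = (c-1) * (δ * x) by ring, iden1]
      · have hmul : Tendsto (fun x => (c-1) * Real.sqrt (r x)) atTop atTop :=
          hsr.const_mul_atTop hc1
        have hneg : Tendsto (fun x => -((c-1) * Real.sqrt (r x))) atTop atBot :=
          tendsto_neg_atTop_atBot.comp hmul
        have t1 : Tendsto (fun x => Real.exp (-((c-1) * Real.sqrt (r x)))) atTop (nhds 0) :=
          Real.tendsto_exp_atBot.comp hneg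
        have t2 : Tendsto (fun x => 1 / Real.sqrt (r x)) atTop (nhds 0) := by
          simp only [one_div]
          exact hsr.inv_tendsto_atTop
        simpa using t1.add t2
    have lo2 : (fun x => lnG μ σ 1 (c*x) * lnG μ σ 1 x / (lnG μ σ 0 x)^2)
        =o[atTop] (fun x => (lnG μ σ 1 x / lnG μ σ 0 x)^2) := by
      apply isLittleO_of_tendsto'
      · filter_upwards [eventually_gt_atTop (0:ℝ)] with x hx hzero
        exfalso
        have h0 := lnG_pos hσ (μ := μ) 0 hx
        have h1 := lnG_pos hσ (μ := μ) 1 hx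
        exact (pow_ne_zero 2 (div_ne_zero h1.ne' h0.ne')) hzero
      · apply Tendsto.congr' ?_ key2
        filter_upwards [eventually_gt_atTop (0:ℝ)] with x hx
        have h0 := (lnG_pos hσ (μ := μ) 0 hx).ne'
        have h1 := (lnG_pos hσ (μ := μ) 1 hx).ne'
        field_simp
    exact lo2.congr' hfeq2.symm hGeq.symm
end

section
/- Let q_j be mixed-logit demand with Gamma(r, β) mixing (r > 0, β > 0, market size M > 0, mean utilities δ ∈ ℝ^J), and let H_j(p) = ∫₀^∞ z^{r−1} Ψ_j(z; p) dz with Ψ_j(z; p) = exp(δ_j − z p_j)/(1 + Σ_{ℓ=1}^J exp(δ_ℓ − z p_ℓ)). Then for each fixed ray p ∈ ℝ_{++}^J, λ^r q_j(λ p) → (M β^r/Γ(r)) H_j(p) as λ → ∞. -/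
open MeasureTheory Real Filter

/-- Logit choice probability of product `j` at prices `p`, mean utilities `δ`,
and price coefficient `α`. -/
noncomputable def logitShare {J : ℕ} (δ : Fin J → ℝ) (j : Fin J) (p : Fin J → ℝ) (α : ℝ) : ℝ :=
  Real.exp (δ j - α * p j) / (1 + ∑ l, Real.exp (δ l - α * p l))

/-- Rescaled logit kernel `Ψ_j(z; p)`. -/
noncomputable def Psi {J : ℕ} (δ : Fin J → ℝ) (j : Fin J) (z : ℝ) (p : Fin J → ℝ) : ℝ :=
  Real.exp (δ j - z * p j) / (1 + ∑ l, Real.exp (δ l - z * p l))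

/-- Mixed-logit demand for product `j` with `Gamma(r, β)` mixing over the price
coefficient, market size `M`. -/
noncomputable def qG {J : ℕ} (δ : Fin J → ℝ) (M r β : ℝ) (j : Fin J) (p : Fin J → ℝ) : ℝ :=
  M * ∫ α in Set.Ioi (0 : ℝ),
    logitShare δ j p α * (β ^ r / Real.Gamma r * α ^ (r - 1) * Real.exp (-β * α))

/-- Limit demand term `H_j(p) = ∫₀^∞ z^{r−1} Ψ_j(z; p) dz`. -/
noncomputable def Hfun {J : ℕ} (δ : Fin J → ℝ) (r : ℝ) (j : Fin J) (p : Fin J → ℝ) : ℝ :=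
  ∫ z in Set.Ioi (0 : ℝ), z ^ (r - 1) * Psi δ j z p

/-- Market-interaction correction `C_j(p)`. -/
noncomputable def Cfun {J : ℕ} (δ : Fin J → ℝ) (r : ℝ) (j : Fin J) (p : Fin J → ℝ) : ℝ :=
  (1 / Real.Gamma r) * ∫ u in Set.Ioi (0 : ℝ),
    u ^ (r - 1) * Real.exp (-u) / (1 + ∑ l, Real.exp (δ l - p l / p j * u))

/-- Partial derivative of `F : (Fin J → ℝ) → ℝ` in the `k`-th coordinate at `p`. -/
noncomputable def pd {J : ℕ} (F : (Fin J → ℝ) → ℝ) (k : Fin J) (p : Fin J → ℝ) : ℝ :=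
  deriv (fun t => F (Function.update p k t)) (p k)

open Set in
lemma Psi_nonneg {J : ℕ} (δ : Fin J → ℝ) (j : Fin J) (z : ℝ) (p : Fin J → ℝ) :
    0 ≤ Psi δ j z p := by
  unfold Psi
  have hd : (0:ℝ) < 1 + ∑ l, Real.exp (δ l - z * p l) := by positivity
  exact div_nonneg (Real.exp_pos _).le hd.le

open Set in
lemma Psi_le {J : ℕ} (δ : Fin J → ℝ) (j : Fin J) (z : ℝ) (p : Fin J → ℝ) :
    Psi δ j z p ≤ Real.exp (δ j) * Real.exp (-(p j * z)) := by
  unfold Psi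
  have h1 : (1:ℝ) ≤ 1 + ∑ l, Real.exp (δ l - z * p l) := by
    have : (0:ℝ) ≤ ∑ l, Real.exp (δ l - z * p l) :=
      Finset.sum_nonneg fun _ _ => (Real.exp_pos _).le
    linarith
  calc Real.exp (δ j - z * p j) / (1 + ∑ l, Real.exp (δ l - z * p l))
      ≤ Real.exp (δ j - z * p j) := div_le_self (Real.exp_pos _).le h1
    _ = Real.exp (δ j) * Real.exp (-(p j * z)) := by
        rw [← Real.exp_add]; ring_nf

open Set in
lemma Psi_continuous {J : ℕ} (δ : Fin J → ℝ) (j : Fin J) (p : Fin J → ℝ) :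
    Continuous (fun z : ℝ => Psi δ j z p) := by
  unfold Psi
  apply Continuous.div (by continuity) (by continuity)
  intro z
  have : (0:ℝ) < 1 + ∑ l, Real.exp (δ l - z * p l) := by positivity
  exact this.ne'

/-- Along any ray `p ∈ ℝ_{++}^J`, `λ^r q_j(λp) → (Mβ^r/Γ(r)) H_j(p)` as `λ → ∞`. -/
theorem qG_ray_limit {J : ℕ} (hJ : 1 ≤ J) (M : ℝ) (hM : 0 < M)
    (δ : Fin J → ℝ) (r β : ℝ) (hr : 0 < r) (hβ : 0 < β)
    (p : Fin J → ℝ) (hp : ∀ i, 0 < p i) (j : Fin J) :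
    Tendsto (fun l : ℝ => l ^ r * qG δ M r β j (l • p)) atTop
      (nhds (M * β ^ r / Real.Gamma r * Hfun δ r j p)) := by
  set c : ℝ := β ^ r / Real.Gamma r with hc
  set F : ℝ → ℝ → ℝ := fun l z => z ^ (r - 1) * Psi δ j z p * Real.exp (-β * z / l) with hF
  -- DCT
  have hbound_int : IntegrableOn
      (fun z : ℝ => z ^ (r - 1) * (Real.exp (δ j) * Real.exp (-(p j * z)))) (Set.Ioi 0) := by
    have h := integrableOn_rpow_mul_exp_neg_mul_rpow (p := 1) (s := r - 1) (b := p j)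
      (by linarith) one_pos (hp j)
    have h2 : IntegrableOn
        (fun x : ℝ => Real.exp (δ j) * (x ^ (r - 1) * Real.exp (-p j * x ^ (1:ℝ))))
        (Set.Ioi 0) := h.const_mul _
    refine h2.congr_fun (fun x hx => ?_) measurableSet_Ioi
    beta_reduce
    rw [Real.rpow_one, neg_mul]
    ring
  have hDCT : Tendsto (fun l : ℝ => ∫ z in Set.Ioi (0:ℝ), F l z) atTop
      (nhds (Hfun δ r j p)) := by
    unfold Hfun
    apply tendsto_integral_filter_of_dominated_convergence
      (fun z : ℝ => z ^ (r - 1) * (Real.exp (δ j) * Real.exp (-(p j * z))))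
    · refine Eventually.of_forall fun l => ?_
      refine ContinuousOn.aestronglyMeasurable ?_ measurableSet_Ioi
      refine ContinuousOn.mul (ContinuousOn.mul
        (fun x hx => (Real.continuousAt_rpow_const x _ (Or.inl (ne_of_gt hx))).continuousWithinAt)
        (Psi_continuous δ j p).continuousOn) (by fun_prop)
    · filter_upwards [eventually_gt_atTop (0:ℝ)] with l hl
      filter_upwards [ae_restrict_mem measurableSet_Ioi] with z hz
      have hz0 : (0:ℝ) < z := hz
      have h1 : Real.exp (-β * z / l) ≤ 1 := by
        rw [Real.exp_le_one_iff]
        have : 0 ≤ β * z / l := by positivity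
        rw [neg_mul, neg_div]
        linarith
      have hnn : 0 ≤ F l z :=
        mul_nonneg (mul_nonneg (Real.rpow_nonneg hz0.le _) (Psi_nonneg δ j z p))
          (Real.exp_pos _).le
      rw [Real.norm_eq_abs, abs_of_nonneg hnn]
      calc F l z ≤ z ^ (r - 1) * Psi δ j z p * 1 := by
            exact mul_le_mul_of_nonneg_left h1
              (mul_nonneg (Real.rpow_nonneg hz0.le _) (Psi_nonneg δ j z p))
        _ = z ^ (r - 1) * Psi δ j z p := mul_one _
        _ ≤ z ^ (r - 1) * (Real.exp (δ j) * Real.exp (-(p j * z))) :=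
            mul_le_mul_of_nonneg_left (Psi_le δ j z p) (Real.rpow_nonneg hz0.le _)
    · exact hbound_int
    · refine Eventually.of_forall fun z => ?_
      have h0 : Tendsto (fun l : ℝ => -β * z / l) atTop (nhds 0) :=
        tendsto_const_nhds.div_atTop tendsto_id
      have h1 : Tendsto (fun l : ℝ => Real.exp (-β * z / l)) atTop (nhds 1) := by
        have := (Real.continuous_exp.tendsto 0).comp h0
        simpa [Function.comp_def] using this
      have := h1.const_mul (z ^ (r - 1) * Psi δ j z p)
      simpa [hF] using this
  -- eventual identity
  have key : ∀ᶠ l in atTop, l ^ r * qG δ M r β j (l • p)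
      = (M * c) * ∫ z in Set.Ioi (0:ℝ), F l z := by
    filter_upwards [eventually_gt_atTop (0:ℝ)] with l hl
    have hl0 : l ≠ 0 := hl.ne'
    set g : ℝ → ℝ := fun u => Psi δ j u p * (c * (u / l) ^ (r - 1) * Real.exp (-β * (u / l)))
      with hg
    have step1 : (fun α : ℝ => logitShare δ j (l • p) α
        * (c * α ^ (r - 1) * Real.exp (-β * α))) = fun α => g (l * α) := by
      funext α
      have h1 : logitShare δ j (l • p) α = Psi δ j (l * α) p := by
        unfold logitShare Psi
        simp only [Pi.smul_apply, smul_eq_mul]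
        congr 1
        · ring_nf
        · congr 1; apply Finset.sum_congr rfl; intro i _; ring_nf
      rw [h1, hg]
      simp only [mul_div_cancel_left₀ _ hl0]
    have step2 : ∫ α in Set.Ioi (0:ℝ), g (l * α) = l⁻¹ • ∫ u in Set.Ioi (l * 0), g u :=
      integral_comp_mul_left_Ioi g 0 hl
    have step3 : ∫ u in Set.Ioi (0:ℝ), g u
        = (c / l ^ (r - 1)) * ∫ z in Set.Ioi (0:ℝ), F l z := by
      rw [← integral_const_mul]
      refine setIntegral_congr_fun measurableSet_Ioi (fun u hu => ?_)
      have hu0 : (0:ℝ) < u := hu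
      rw [hg, hF]
      simp only
      rw [Real.div_rpow hu0.le hl.le]
      rw [show -β * (u / l) = -β * u / l by ring]
      field_simp
    have hlr : l ^ (r - 1) = l ^ r / l := by
      rw [Real.rpow_sub hl, Real.rpow_one]
    have hlrpos : (0:ℝ) < l ^ r := Real.rpow_pos_of_pos hl r
    rw [qG, step1, step2, show l * (0:ℝ) = 0 from mul_zero l, step3, hlr, smul_eq_mul]
    field_simp
  have hfinal := hDCT.const_mul (M * c)
  have heq : M * β ^ r / Real.Gamma r * Hfun δ r j p = (M * c) * Hfun δ r j p := by
    rw [hc]; ring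
  rw [heq]
  exact hfinal.congr' (key.mono fun l h => h.symm)
end

section
/- Let q_j be mixed-logit demand with Gamma(r, β) mixing (r > 0, β > 0, market size M > 0, mean utilities δ ∈ ℝ^J), and define κ_{jj}^j(p) = q_j(p) ∂²_{p_j p_j} q_j(p)/(∂_{p_j} q_j(p))², η_{jk}(p) = ∂_{p_k} q_j(p)/q_j(p), C_j(p) = (1/Γ(r)) ∫₀^∞ u^{r−1} e^{−u}/(1 + Σ_{ℓ=1}^J exp(δ_ℓ − (p_ℓ/p_j) u)) du, ζ_j(p) = −(p_j/r) ∂_{p_j} log C_j(p), χ_j(p) = (p_j²/r) ∂²_{p_j p_j} log C_j(p), and ξ_{jk}(p) = (p_j²/r) ∂²_{p_j p_k} log C_j(p) for k ≠ j. Then along any ray p ∈ ℝ_{++}^J, as λ → ∞: −2 + κ_{jj}^j(λ p) → −1 + (1/r)(1 + χ_j(p))/(1 + ζ_j(p))², and for each k ≠ j, ∂_{p_j} η_{jk}(λ p)/η_{jj}(λ p)² → (1/r) ξ_{jk}(p)/(1 + ζ_j(p))². -/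
open MeasureTheory Real Filter

open Set Metric Function

namespace QGaux

variable {J : ℕ} (δ : Fin J → ℝ)

/-- denominator -/
noncomputable def den (w : Fin J → ℝ) (u : ℝ) : ℝ := 1 + ∑ l, Real.exp (δ l - u * w l)

lemma den_pos (w : Fin J → ℝ) (u : ℝ) : 0 < den δ w u := by
  have : 0 ≤ ∑ l, Real.exp (δ l - u * w l) :=
    Finset.sum_nonneg fun l _ => (Real.exp_pos _).le
  unfold den; linarith

lemma one_le_den (w : Fin J → ℝ) (u : ℝ) : 1 ≤ den δ w u := by
  have : 0 ≤ ∑ l, Real.exp (δ l - u * w l) :=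
    Finset.sum_nonneg fun l _ => (Real.exp_pos _).le
  unfold den; linarith

lemma term_le_den (w : Fin J → ℝ) (u : ℝ) (l : Fin J) :
    Real.exp (δ l - u * w l) ≤ den δ w u := by
  have h1 : Real.exp (δ l - u * w l) ≤ ∑ l', Real.exp (δ l' - u * w l') :=
    Finset.single_le_sum (fun l' _ => (Real.exp_pos (δ l' - u * w l')).le) (Finset.mem_univ l)
  unfold den; linarith

lemma Psi_eq (j : Fin J) (u : ℝ) (w : Fin J → ℝ) :
    Psi δ j u w = Real.exp (δ j - u * w j) / den δ w u := rfl

lemma Psi_pos (j : Fin J) (u : ℝ) (w : Fin J → ℝ) : 0 < Psi δ j u w :=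
  div_pos (Real.exp_pos _) (den_pos δ w u)

lemma Psi_lt_one (j : Fin J) (u : ℝ) (w : Fin J → ℝ) : Psi δ j u w < 1 := by
  rw [Psi_eq, div_lt_one (den_pos δ w u)]
  have h1 : Real.exp (δ j - u * w j) ≤ ∑ l', Real.exp (δ l' - u * w l') :=
    Finset.single_le_sum (fun l' _ => (Real.exp_pos (δ l' - u * w l')).le) (Finset.mem_univ j)
  unfold den; linarith

lemma Psi_le_bound (j : Fin J) (u : ℝ) (w : Fin J → ℝ) :
    Psi δ j u w ≤ Real.exp (δ j) * Real.exp (-(w j * u)) := by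
  have h : Psi δ j u w ≤ Real.exp (δ j - u * w j) :=
    div_le_self (Real.exp_pos _).le (one_le_den δ w u)
  calc Psi δ j u w ≤ Real.exp (δ j - u * w j) := h
    _ = Real.exp (δ j) * Real.exp (-(w j * u)) := by
        rw [← Real.exp_add]; ring_nf

end QGaux

namespace QGaux

variable {J : ℕ} (δ : Fin J → ℝ)

lemma hasDerivAt_den (w : Fin J → ℝ) (i : Fin J) (u t : ℝ) :
    HasDerivAt (fun t => den δ (Function.update w i t) u)
      (Real.exp (δ i - u * t) * (-u)) t := by
  have hfun : (fun t => den δ (Function.update w i t) u) =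
      fun t => (1 + ∑ l ∈ Finset.univ.erase i, Real.exp (δ l - u * w l)) +
        Real.exp (δ i - u * t) := by
    funext s
    unfold den
    rw [← Finset.sum_erase_add _ _ (Finset.mem_univ i)]
    rw [Function.update_self]
    have : ∑ l ∈ Finset.univ.erase i, Real.exp (δ l - u * Function.update w i s l) =
        ∑ l ∈ Finset.univ.erase i, Real.exp (δ l - u * w l) := by
      refine Finset.sum_congr rfl fun l hl => ?_
      rw [Function.update_of_ne (Finset.ne_of_mem_erase hl)]
    rw [this]; ring
  rw [hfun]
  have h1 : HasDerivAt (fun s : ℝ => δ i - u * s) (-u) t := by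
    simpa using ((hasDerivAt_id t).const_mul u).const_sub (δ i)
  exact (h1.exp).const_add _

lemma hasDerivAt_Psi_same (w : Fin J → ℝ) (j : Fin J) (u t : ℝ) :
    HasDerivAt (fun t => Psi δ j u (Function.update w j t))
      (-(u * Psi δ j u (Function.update w j t) *
        (1 - Psi δ j u (Function.update w j t)))) t := by
  have hnum : HasDerivAt (fun s : ℝ => Real.exp (δ j - u * s))
      (Real.exp (δ j - u * t) * (-u)) t := by
    have h1 : HasDerivAt (fun s : ℝ => δ j - u * s) (-u) t := by
      simpa using ((hasDerivAt_id t).const_mul u).const_sub (δ j)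
    exact h1.exp
  have hd := hasDerivAt_den δ w j u t
  have hne : den δ (Function.update w j t) u ≠ 0 := (den_pos δ _ u).ne'
  have hfun : (fun t => Psi δ j u (Function.update w j t)) =
      fun s => Real.exp (δ j - u * s) / den δ (Function.update w j s) u := by
    funext s; rw [Psi_eq, Function.update_self]
  rw [hfun]
  have := hnum.div hd hne
  refine this.congr_deriv (Eq.symm ?_)
  rw [Psi_eq, Function.update_self]
  field_simp
  ring

lemma hasDerivAt_Psi_other (w : Fin J → ℝ) {i j : Fin J} (hij : j ≠ i) (u t : ℝ) :
    HasDerivAt (fun t => Psi δ j u (Function.update w i t))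
      (u * Psi δ j u (Function.update w i t) * Psi δ i u (Function.update w i t)) t := by
  have hd := hasDerivAt_den δ w i u t
  have hne : den δ (Function.update w i t) u ≠ 0 := (den_pos δ _ u).ne'
  have hfun : (fun t => Psi δ j u (Function.update w i t)) =
      fun s => Real.exp (δ j - u * w j) / den δ (Function.update w i s) u := by
    funext s; rw [Psi_eq, Function.update_of_ne hij]
  rw [hfun]
  have := (hasDerivAt_const t (Real.exp (δ j - u * w j))).div hd hne
  refine this.congr_deriv (Eq.symm ?_)
  rw [Psi_eq, Psi_eq, Function.update_of_ne hij, Function.update_self]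
  field_simp
  ring

end QGaux

namespace QGaux

variable {J : ℕ} (δ : Fin J → ℝ)

/-- kernels -/
noncomputable def kP (j : Fin J) (w : Fin J → ℝ) (u : ℝ) : ℝ := Psi δ j u w
noncomputable def kD1 (j : Fin J) (w : Fin J → ℝ) (u : ℝ) : ℝ :=
  -(u * Psi δ j u w * (1 - Psi δ j u w))
noncomputable def kD2 (j : Fin J) (w : Fin J → ℝ) (u : ℝ) : ℝ :=
  u ^ 2 * Psi δ j u w * (1 - Psi δ j u w) * (1 - 2 * Psi δ j u w)
noncomputable def kX1 (j k : Fin J) (w : Fin J → ℝ) (u : ℝ) : ℝ :=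
  u * Psi δ j u w * Psi δ k u w
noncomputable def kX2 (j k : Fin J) (w : Fin J → ℝ) (u : ℝ) : ℝ :=
  u ^ 2 * Psi δ j u w * Psi δ k u w * (2 * Psi δ j u w - 1)

lemma hasDerivAt_kD1 (w : Fin J → ℝ) (j : Fin J) (u t : ℝ) :
    HasDerivAt (fun t => kD1 δ j (Function.update w j t) u)
      (kD2 δ j (Function.update w j t) u) t := by
  have h := hasDerivAt_Psi_same δ w j u t
  have h2 := ((h.mul (h.const_sub 1)).const_mul u).neg
  have hfun : (fun t => kD1 δ j (Function.update w j t) u) =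
      fun t => -(u * (Psi δ j u (Function.update w j t) *
        (1 - Psi δ j u (Function.update w j t)))) := by
    funext s; unfold kD1; ring
  rw [hfun]
  refine h2.congr_deriv (Eq.symm ?_)
  unfold kD2; ring

lemma hasDerivAt_kX1 (w : Fin J → ℝ) {j k : Fin J} (hkj : k ≠ j) (u t : ℝ) :
    HasDerivAt (fun t => kX1 δ j k (Function.update w j t) u)
      (kX2 δ j k (Function.update w j t) u) t := by
  have hj := hasDerivAt_Psi_same δ w j u t
  have hk := hasDerivAt_Psi_other δ w (i := j) (j := k) hkj u t
  have h2 := (hj.mul hk).const_mul u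
  have hfun : (fun t => kX1 δ j k (Function.update w j t) u) =
      fun t => u * (Psi δ j u (Function.update w j t) *
        Psi δ k u (Function.update w j t)) := by
    funext s; unfold kX1; ring
  rw [hfun]
  refine h2.congr_deriv (Eq.symm ?_)
  unfold kX2; ring

lemma cont_Psi (j : Fin J) (w : Fin J → ℝ) : Continuous (fun u => Psi δ j u w) := by
  apply Continuous.div
  · exact (continuous_const.sub (continuous_id.mul continuous_const)).rexp
  · refine continuous_const.add (continuous_finset_sum _ fun l _ => ?_)
    exact (continuous_const.sub (continuous_id.mul continuous_const)).rexp
  · exact fun u => (den_pos δ w u).ne'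

lemma cont_kP (j : Fin J) (w : Fin J → ℝ) : Continuous (kP δ j w) := cont_Psi δ j w

lemma cont_kD1 (j : Fin J) (w : Fin J → ℝ) : Continuous (kD1 δ j w) := by
  have h := cont_Psi δ j w
  exact ((continuous_id.mul h).mul (continuous_const.sub h)).neg

lemma cont_kD2 (j : Fin J) (w : Fin J → ℝ) : Continuous (kD2 δ j w) := by
  have h := cont_Psi δ j w
  exact (((continuous_id.pow 2).mul h).mul (continuous_const.sub h)).mul
    (continuous_const.sub (continuous_const.mul h))

lemma cont_kX1 (j k : Fin J) (w : Fin J → ℝ) : Continuous (kX1 δ j k w) := by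
  exact (continuous_id.mul (cont_Psi δ j w)).mul (cont_Psi δ k w)

lemma cont_kX2 (j k : Fin J) (w : Fin J → ℝ) : Continuous (kX2 δ j k w) := by
  exact (((continuous_id.pow 2).mul (cont_Psi δ j w)).mul (cont_Psi δ k w)).mul
    ((continuous_const.mul (cont_Psi δ j w)).sub continuous_const)

/-- bounds -/
lemma abs_kP_le (j : Fin J) (w : Fin J → ℝ) {a u : ℝ} (hu : 0 ≤ u) (haw : a ≤ w j) :
    |kP δ j w u| ≤ Real.exp (δ j) * Real.exp (-(a * u)) := by
  have h0 := Psi_pos δ j u w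
  have h1 := Psi_le_bound δ j u w
  have h2 : Real.exp (-(w j * u)) ≤ Real.exp (-(a * u)) := by
    apply Real.exp_le_exp.mpr
    have := mul_le_mul_of_nonneg_right haw hu
    linarith
  unfold kP; rw [abs_of_pos h0]
  calc Psi δ j u w ≤ Real.exp (δ j) * Real.exp (-(w j * u)) := h1
    _ ≤ Real.exp (δ j) * Real.exp (-(a * u)) := by
        exact mul_le_mul_of_nonneg_left h2 (Real.exp_pos _).le

lemma abs_kD1_le (j : Fin J) (w : Fin J → ℝ) {a u : ℝ} (hu : 0 ≤ u) (haw : a ≤ w j) :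
    |kD1 δ j w u| ≤ Real.exp (δ j) * (u * Real.exp (-(a * u))) := by
  have h0 := Psi_pos δ j u w
  have h1 := Psi_lt_one δ j u w
  have h2 := abs_kP_le δ j w hu haw
  unfold kP at h2; rw [abs_of_pos h0] at h2
  have he : |kD1 δ j w u| = u * Psi δ j u w * (1 - Psi δ j u w) := by
    unfold kD1; rw [abs_neg, abs_of_nonneg]
    have : 0 ≤ 1 - Psi δ j u w := by linarith
    positivity
  rw [he]
  calc u * Psi δ j u w * (1 - Psi δ j u w) ≤ u * Psi δ j u w * 1 := by
        apply mul_le_mul_of_nonneg_left (by linarith) (by positivity)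
    _ = u * Psi δ j u w := mul_one _
    _ ≤ u * (Real.exp (δ j) * Real.exp (-(a * u))) :=
        mul_le_mul_of_nonneg_left h2 hu
    _ = Real.exp (δ j) * (u * Real.exp (-(a * u))) := by ring

lemma abs_kD2_le (j : Fin J) (w : Fin J → ℝ) {a u : ℝ} (hu : 0 ≤ u) (haw : a ≤ w j) :
    |kD2 δ j w u| ≤ Real.exp (δ j) * (u ^ 2 * Real.exp (-(a * u))) := by
  have h0 := Psi_pos δ j u w
  have h1 := Psi_lt_one δ j u w
  have h2 := abs_kP_le δ j w hu haw
  unfold kP at h2; rw [abs_of_pos h0] at h2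
  have hnn : (0:ℝ) ≤ u ^ 2 * Psi δ j u w * (1 - Psi δ j u w) := by
    have : 0 ≤ 1 - Psi δ j u w := by linarith
    positivity
  have he : |kD2 δ j w u| = u ^ 2 * Psi δ j u w * (1 - Psi δ j u w) * |1 - 2 * Psi δ j u w| := by
    unfold kD2; rw [abs_mul, abs_of_nonneg hnn]
  rw [he]
  have h3 : |1 - 2 * Psi δ j u w| ≤ 1 := abs_le.mpr ⟨by linarith, by linarith⟩
  calc u ^ 2 * Psi δ j u w * (1 - Psi δ j u w) * |1 - 2 * Psi δ j u w|
      ≤ u ^ 2 * Psi δ j u w * (1 - Psi δ j u w) * 1 := mul_le_mul_of_nonneg_left h3 hnn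
    _ = u ^ 2 * Psi δ j u w * (1 - Psi δ j u w) := mul_one _
    _ ≤ u ^ 2 * Psi δ j u w * 1 := by
        apply mul_le_mul_of_nonneg_left (by linarith) (by positivity)
    _ = u ^ 2 * Psi δ j u w := mul_one _
    _ ≤ u ^ 2 * (Real.exp (δ j) * Real.exp (-(a * u))) :=
        mul_le_mul_of_nonneg_left h2 (sq_nonneg u)
    _ = Real.exp (δ j) * (u ^ 2 * Real.exp (-(a * u))) := by ring

lemma abs_kX1_le (j k : Fin J) (w : Fin J → ℝ) {a u : ℝ} (hu : 0 ≤ u) (haw : a ≤ w j) :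
    |kX1 δ j k w u| ≤ Real.exp (δ j) * (u * Real.exp (-(a * u))) := by
  have h0 := Psi_pos δ j u w
  have h0k := Psi_pos δ k u w
  have h1k := Psi_lt_one δ k u w
  have h2 := abs_kP_le δ j w hu haw
  unfold kP at h2; rw [abs_of_pos h0] at h2
  have he : |kX1 δ j k w u| = u * Psi δ j u w * Psi δ k u w := by
    unfold kX1; rw [abs_of_nonneg]; positivity
  rw [he]
  calc u * Psi δ j u w * Psi δ k u w ≤ u * Psi δ j u w * 1 := by
        apply mul_le_mul_of_nonneg_left (by linarith) (by positivity)
    _ = u * Psi δ j u w := mul_one _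
    _ ≤ u * (Real.exp (δ j) * Real.exp (-(a * u))) := mul_le_mul_of_nonneg_left h2 hu
    _ = Real.exp (δ j) * (u * Real.exp (-(a * u))) := by ring

lemma abs_kX2_le (j k : Fin J) (w : Fin J → ℝ) {a u : ℝ} (hu : 0 ≤ u) (haw : a ≤ w j) :
    |kX2 δ j k w u| ≤ Real.exp (δ j) * (u ^ 2 * Real.exp (-(a * u))) := by
  have h0 := Psi_pos δ j u w
  have h1 := Psi_lt_one δ j u w
  have h0k := Psi_pos δ k u w
  have h1k := Psi_lt_one δ k u w
  have h2 := abs_kP_le δ j w hu haw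
  unfold kP at h2; rw [abs_of_pos h0] at h2
  have hnn : (0:ℝ) ≤ u ^ 2 * Psi δ j u w * Psi δ k u w := by positivity
  have he : |kX2 δ j k w u| = u ^ 2 * Psi δ j u w * Psi δ k u w * |2 * Psi δ j u w - 1| := by
    unfold kX2; rw [abs_mul, abs_of_nonneg hnn]
  rw [he]
  have h3 : |2 * Psi δ j u w - 1| ≤ 1 := abs_le.mpr ⟨by linarith, by linarith⟩
  calc u ^ 2 * Psi δ j u w * Psi δ k u w * |2 * Psi δ j u w - 1|
      ≤ u ^ 2 * Psi δ j u w * Psi δ k u w * 1 := mul_le_mul_of_nonneg_left h3 hnn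
    _ = u ^ 2 * Psi δ j u w * Psi δ k u w := mul_one _
    _ ≤ u ^ 2 * Psi δ j u w * 1 := by
        apply mul_le_mul_of_nonneg_left (by linarith) (by positivity)
    _ = u ^ 2 * Psi δ j u w := mul_one _
    _ ≤ u ^ 2 * (Real.exp (δ j) * Real.exp (-(a * u))) :=
        mul_le_mul_of_nonneg_left h2 (sq_nonneg u)
    _ = Real.exp (δ j) * (u ^ 2 * Real.exp (-(a * u))) := by ring

end QGaux

namespace QGaux

open MeasureTheory

/-- weighted integral functional -/
noncomputable def IK (r c : ℝ) (K : ℝ → ℝ) : ℝ :=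
  ∫ u in Set.Ioi (0:ℝ), u ^ (r - 1) * Real.exp (-(c * u)) * K u

lemma integrable_pow_exp {m a : ℝ} (hm : -1 < m) (ha : 0 < a) :
    IntegrableOn (fun u : ℝ => u ^ m * Real.exp (-(a * u))) (Set.Ioi 0) := by
  have h := integrableOn_rpow_mul_exp_neg_mul_rpow hm one_pos ha
  refine h.congr_fun (fun x hx => ?_) measurableSet_Ioi
  beta_reduce; rw [Real.rpow_one]; ring_nf

lemma contOn_rpow (r : ℝ) : ContinuousOn (fun u : ℝ => u ^ (r - 1)) (Set.Ioi 0) :=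
  fun x hx => (Real.continuousAt_rpow_const x (r - 1) (Or.inl (ne_of_gt hx))).continuousWithinAt

lemma aesm_weight (r c : ℝ) {K : ℝ → ℝ} (hK : Continuous K) :
    AEStronglyMeasurable (fun u => u ^ (r - 1) * Real.exp (-(c * u)) * K u)
      (volume.restrict (Set.Ioi 0)) := by
  refine ContinuousOn.aestronglyMeasurable ?_ measurableSet_Ioi
  exact ((contOn_rpow r).mul
    ((continuous_const.mul continuous_id).neg.rexp.continuousOn)).mul hK.continuousOn

lemma integrable_weight (r : ℝ) (hr : 0 < r) {c a Cb m : ℝ} (hc : 0 ≤ c) (ha : 0 < a)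
    (hm : 0 ≤ m) (hCb : 0 ≤ Cb) {K : ℝ → ℝ} (hK : Continuous K)
    (hb : ∀ u ∈ Set.Ioi (0:ℝ), |K u| ≤ Cb * (u ^ m * Real.exp (-(a * u)))) :
    IntegrableOn (fun u => u ^ (r - 1) * Real.exp (-(c * u)) * K u) (Set.Ioi 0) := by
  have hint : IntegrableOn (fun u : ℝ => Cb * (u ^ (r - 1 + m) * Real.exp (-(a * u))))
      (Set.Ioi 0) := (integrable_pow_exp (by linarith) ha).const_mul Cb
  refine Integrable.mono' hint (aesm_weight r c hK) ?_
  rw [ae_restrict_iff' measurableSet_Ioi]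
  refine Filter.Eventually.of_forall fun u hu => ?_
  have hu' : (0:ℝ) < u := hu
  have h1 : |u ^ (r - 1) * Real.exp (-(c * u))| = u ^ (r - 1) * Real.exp (-(c * u)) := by
    rw [abs_of_nonneg]; positivity
  rw [norm_mul, Real.norm_eq_abs, Real.norm_eq_abs, h1]
  calc u ^ (r - 1) * Real.exp (-(c * u)) * |K u|
      ≤ u ^ (r - 1) * Real.exp (-(c * u)) * (Cb * (u ^ m * Real.exp (-(a * u)))) := by
        apply mul_le_mul_of_nonneg_left (hb u hu) (by positivity)
    _ = Cb * (u ^ (r - 1 + m) * Real.exp (-(a * u)) * Real.exp (-(c * u))) := by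
        rw [Real.rpow_add hu']; ring
    _ ≤ Cb * (u ^ (r - 1 + m) * Real.exp (-(a * u)) * 1) := by
        have : Real.exp (-(c * u)) ≤ 1 := by
          rw [Real.exp_le_one_iff]; nlinarith
        apply mul_le_mul_of_nonneg_left _ hCb
        apply mul_le_mul_of_nonneg_left this (by positivity)
    _ = Cb * (u ^ (r - 1 + m) * Real.exp (-(a * u))) := by ring

/-- Master differentiation under the integral sign. -/
lemma hasDerivAt_IK (r : ℝ) (hr : 0 < r) {c a Cb m m₀ : ℝ} (hc : 0 ≤ c) (ha : 0 < a)
    (hm : 0 ≤ m) (hm₀ : 0 ≤ m₀) (K K' : ℝ → ℝ → ℝ) (t₀ ε : ℝ) (hε : 0 < ε)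
    (hKcont : ∀ t, Continuous (K t)) (hK'cont : Continuous (K' t₀))
    (hKb : ∀ u ∈ Set.Ioi (0:ℝ), |K t₀ u| ≤ Cb * (u ^ m₀ * Real.exp (-(a * u))))
    (hK'b : ∀ u ∈ Set.Ioi (0:ℝ), ∀ t ∈ Metric.ball t₀ ε,
      |K' t u| ≤ Cb * (u ^ m * Real.exp (-(a * u))))
    (hderiv : ∀ u ∈ Set.Ioi (0:ℝ), ∀ t ∈ Metric.ball t₀ ε,
      HasDerivAt (fun t' => K t' u) (K' t u) t) :
    HasDerivAt (fun t => IK r c (K t)) (IK r c (K' t₀)) t₀ := by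
  have hCb : 0 ≤ Cb := by
    have h1 := hKb 1 (by norm_num)
    have h2 := abs_nonneg (K t₀ 1)
    rw [Real.one_rpow, one_mul] at h1
    nlinarith [Real.exp_pos (-(a * 1))]
  set bound : ℝ → ℝ := fun u => u ^ (r - 1) * Real.exp (-(c * u)) *
    (Cb * (u ^ m * Real.exp (-(a * u)))) with hbd
  have hmain := hasDerivAt_integral_of_dominated_loc_of_deriv_le
    (F := fun t u => u ^ (r - 1) * Real.exp (-(c * u)) * K t u)
    (F' := fun t u => u ^ (r - 1) * Real.exp (-(c * u)) * K' t u)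
    (x₀ := t₀) (bound := bound) (μ := volume.restrict (Set.Ioi 0)) (Metric.ball_mem_nhds t₀ hε)
    (Filter.Eventually.of_forall fun t => aesm_weight r c (hKcont t))
    (integrable_weight r hr hc ha hm₀ hCb (hKcont t₀) hKb)
    (aesm_weight r c hK'cont) ?_ ?_ ?_
  · exact hmain.2
  · rw [ae_restrict_iff' measurableSet_Ioi]
    refine Filter.Eventually.of_forall fun u hu => fun t ht => ?_
    have hu' : (0:ℝ) < u := hu
    rw [norm_mul, Real.norm_eq_abs, Real.norm_eq_abs, hbd]
    have h1 : |u ^ (r - 1) * Real.exp (-(c * u))| = u ^ (r - 1) * Real.exp (-(c * u)) := by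
      rw [abs_of_nonneg]; positivity
    rw [h1]
    exact mul_le_mul_of_nonneg_left (hK'b u hu t ht) (by positivity)
  · rw [hbd]
    have : IntegrableOn (fun u : ℝ => (Cb * (u ^ (r - 1 + m) * Real.exp (-((a + c) * u)))))
        (Set.Ioi 0) := (integrable_pow_exp (by linarith) (by linarith)).const_mul Cb
    refine this.congr_fun (fun u hu => ?_) measurableSet_Ioi
    have hu' : (0:ℝ) < u := hu
    beta_reduce; rw [Real.rpow_add hu', show -((a + c) * u) = -(a * u) + -(c * u) by ring, Real.exp_add]
    ring
  · rw [ae_restrict_iff' measurableSet_Ioi]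
    refine Filter.Eventually.of_forall fun u hu => fun t ht => ?_
    exact (hderiv u hu t ht).const_mul _

end QGaux

namespace QGaux

open MeasureTheory

lemma IK_pos (r : ℝ) (hr : 0 < r) {c a Cb m : ℝ} (hc : 0 ≤ c) (ha : 0 < a)
    (hm : 0 ≤ m) (hCb : 0 ≤ Cb) {K : ℝ → ℝ} (hK : Continuous K)
    (hb : ∀ u ∈ Set.Ioi (0:ℝ), |K u| ≤ Cb * (u ^ m * Real.exp (-(a * u))))
    (hpos : ∀ u ∈ Set.Ioi (0:ℝ), 0 < K u) :
    0 < IK r c K := by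
  unfold IK
  rw [setIntegral_pos_iff_support_of_nonneg_ae]
  · have hsub : Set.Ioi (0:ℝ) ⊆
        Function.support (fun u => u ^ (r - 1) * Real.exp (-(c * u)) * K u) ∩ Set.Ioi 0 := by
      intro u hu
      have hu' : (0:ℝ) < u := hu
      refine ⟨?_, hu⟩
      have := hpos u hu
      have h1 : 0 < u ^ (r - 1) * Real.exp (-(c * u)) * K u := by positivity
      exact Function.mem_support.mpr h1.ne'
    calc (0:ENNReal) < volume (Set.Ioi (0:ℝ)) := by simp [Real.volume_Ioi]
      _ ≤ _ := measure_mono hsub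
  · rw [Filter.EventuallyLE, ae_restrict_iff' measurableSet_Ioi]
    refine Filter.Eventually.of_forall fun u hu => ?_
    have hu' : (0:ℝ) < u := hu
    have := (hpos u hu).le
    simp only [Pi.zero_apply]
    positivity
  · exact integrable_weight r hr hc ha hm hCb hK hb

lemma tendsto_IK (r β : ℝ) (hr : 0 < r) (hβ : 0 < β) {a Cb m : ℝ} (ha : 0 < a)
    (hm : 0 ≤ m) (hCb : 0 ≤ Cb) {K : ℝ → ℝ} (hK : Continuous K)
    (hb : ∀ u ∈ Set.Ioi (0:ℝ), |K u| ≤ Cb * (u ^ m * Real.exp (-(a * u)))) :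
    Filter.Tendsto (fun lam : ℝ => IK r (β / lam) K) Filter.atTop (nhds (IK r 0 K)) := by
  unfold IK
  refine tendsto_integral_filter_of_dominated_convergence
    (bound := fun u => u ^ (r - 1) * (Cb * (u ^ m * Real.exp (-(a * u)))))
    ?_ ?_ ?_ ?_
  · refine Filter.Eventually.of_forall fun lam => aesm_weight r _ hK
  · filter_upwards [Filter.eventually_gt_atTop (0:ℝ)] with lam hlam
    rw [ae_restrict_iff' measurableSet_Ioi]
    refine Filter.Eventually.of_forall fun u hu => ?_
    have hu' : (0:ℝ) < u := hu
    rw [norm_mul, norm_mul, Real.norm_eq_abs, Real.norm_eq_abs, Real.norm_eq_abs,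
      abs_of_nonneg (by positivity : (0:ℝ) ≤ u ^ (r-1)),
      abs_of_nonneg (Real.exp_pos _).le]
    have h1 : Real.exp (-(β / lam * u)) ≤ 1 := by
      rw [Real.exp_le_one_iff]
      have : 0 ≤ β / lam * u := by positivity
      linarith
    calc u ^ (r - 1) * Real.exp (-(β / lam * u)) * |K u|
        ≤ u ^ (r - 1) * 1 * (Cb * (u ^ m * Real.exp (-(a * u)))) := by
          apply mul_le_mul (by apply mul_le_mul_of_nonneg_left h1 (by positivity))
            (hb u hu) (abs_nonneg _) (by positivity)
      _ = u ^ (r - 1) * (Cb * (u ^ m * Real.exp (-(a * u)))) := by ring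
  · have : IntegrableOn (fun u : ℝ => Cb * (u ^ (r - 1 + m) * Real.exp (-(a * u))))
        (Set.Ioi 0) := (integrable_pow_exp (by linarith) ha).const_mul Cb
    refine this.congr_fun (fun u hu => ?_) measurableSet_Ioi
    have hu' : (0:ℝ) < u := hu
    beta_reduce; rw [Real.rpow_add hu']; ring
  · rw [ae_restrict_iff' measurableSet_Ioi]
    refine Filter.Eventually.of_forall fun u hu => ?_
    have h1 : Filter.Tendsto (fun lam : ℝ => β / lam) Filter.atTop (nhds 0) :=
      Filter.Tendsto.div_atTop tendsto_const_nhds Filter.tendsto_id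
    have h2 : Filter.Tendsto (fun lam : ℝ => Real.exp (-(β / lam * u))) Filter.atTop
        (nhds (Real.exp (-((0:ℝ) * u)))) :=
      (Real.continuous_exp.continuousAt.tendsto).comp ((h1.mul_const u).neg)
    have h3 := (h2.const_mul (u ^ (r - 1))).mul_const (K u)
    convert h3 using 2

end QGaux

namespace QGaux

open MeasureTheory

variable {J : ℕ} (δ : Fin J → ℝ)

lemma IK_scale (r c : ℝ) {lam : ℝ} (hlam : 0 < lam) (g : ℝ → ℝ) :
    IK r (c / lam) g = lam ^ r * IK r c (fun u => g (lam * u)) := by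
  have h := integral_comp_mul_left_Ioi
    (fun u => u ^ (r - 1) * Real.exp (-(c / lam * u)) * g u) 0 hlam
  rw [mul_zero] at h
  have key : (∫ x in Set.Ioi (0:ℝ),
        (lam * x) ^ (r - 1) * Real.exp (-(c / lam * (lam * x))) * g (lam * x))
      = lam ^ (r - 1) * ∫ x in Set.Ioi (0:ℝ),
          x ^ (r - 1) * Real.exp (-(c * x)) * g (lam * x) := by
    rw [← integral_const_mul]
    refine setIntegral_congr_fun measurableSet_Ioi fun x hx => ?_
    have hx' : (0:ℝ) < x := hx
    rw [Real.mul_rpow hlam.le hx'.le]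
    have hcc : c / lam * (lam * x) = c * x := by field_simp
    rw [hcc]; ring
  unfold IK
  rw [key, smul_eq_mul] at h
  beta_reduce at h ⊢
  have hlr : lam * lam ^ (r - 1) = lam ^ r := by
    conv_rhs => rw [show r = 1 + (r - 1) by ring]
    rw [Real.rpow_add hlam, Real.rpow_one]
  rw [← hlr, mul_assoc, h]
  field_simp

lemma Psi_scale (j : Fin J) (lam u : ℝ) (p : Fin J → ℝ) :
    Psi δ j (lam * u) p = Psi δ j u (lam • p) := by
  unfold Psi
  have h1 : ∀ l, δ l - lam * u * p l = δ l - u * (lam • p) l := by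
    intro l; simp only [Pi.smul_apply, smul_eq_mul]; ring
  simp only [h1]

lemma kP_scale (j : Fin J) (lam u : ℝ) (p : Fin J → ℝ) :
    kP δ j p (lam * u) = kP δ j (lam • p) u := by
  unfold kP; rw [Psi_scale]

lemma kD1_scale (j : Fin J) {lam : ℝ} (hlam : lam ≠ 0) (u : ℝ) (p : Fin J → ℝ) :
    kD1 δ j p (lam * u) = lam * kD1 δ j (lam • p) u := by
  unfold kD1; rw [Psi_scale]; ring

lemma kD2_scale (j : Fin J) {lam : ℝ} (hlam : lam ≠ 0) (u : ℝ) (p : Fin J → ℝ) :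
    kD2 δ j p (lam * u) = lam ^ 2 * kD2 δ j (lam • p) u := by
  unfold kD2; rw [Psi_scale]; ring

lemma kX1_scale (j k : Fin J) {lam : ℝ} (hlam : lam ≠ 0) (u : ℝ) (p : Fin J → ℝ) :
    kX1 δ j k p (lam * u) = lam * kX1 δ j k (lam • p) u := by
  unfold kX1; rw [Psi_scale, Psi_scale]; ring

lemma kX2_scale (j k : Fin J) {lam : ℝ} (hlam : lam ≠ 0) (u : ℝ) (p : Fin J → ℝ) :
    kX2 δ j k p (lam * u) = lam ^ 2 * kX2 δ j k (lam • p) u := by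
  unfold kX2; rw [Psi_scale, Psi_scale]; ring

lemma IK_mul_kernel (r c : ℝ) (b : ℝ) (g g2 : ℝ → ℝ) (hgg : ∀ u, g u = b * g2 u) :
    IK r c g = b * IK r c g2 := by
  unfold IK
  rw [← integral_const_mul]
  refine setIntegral_congr_fun measurableSet_Ioi fun u hu => ?_
  rw [hgg u]; ring

/-- scaling relations -/
lemma scale_kP (r β : ℝ) {lam : ℝ} (hlam : 0 < lam) (j : Fin J) (p : Fin J → ℝ) :
    IK r (β / lam) (kP δ j p) = lam ^ r * IK r β (kP δ j (lam • p)) := by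
  rw [IK_scale r β hlam]
  congr 1
  have := IK_mul_kernel r β 1 (fun u => kP δ j p (lam * u)) (kP δ j (lam • p))
    (fun u => by show kP δ j p (lam * u) = 1 * kP δ j (lam • p) u; rw [one_mul, kP_scale])
  rw [this, one_mul]

lemma scale_kD1 (r β : ℝ) {lam : ℝ} (hlam : 0 < lam) (j : Fin J) (p : Fin J → ℝ) :
    IK r (β / lam) (kD1 δ j p) = lam ^ r * (lam * IK r β (kD1 δ j (lam • p))) := by
  rw [IK_scale r β hlam]
  congr 1
  exact IK_mul_kernel r β lam _ _ (fun u => kD1_scale δ j hlam.ne' u p)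

lemma scale_kD2 (r β : ℝ) {lam : ℝ} (hlam : 0 < lam) (j : Fin J) (p : Fin J → ℝ) :
    IK r (β / lam) (kD2 δ j p) = lam ^ r * (lam ^ 2 * IK r β (kD2 δ j (lam • p))) := by
  rw [IK_scale r β hlam]
  congr 1
  exact IK_mul_kernel r β (lam ^ 2) _ _ (fun u => kD2_scale δ j hlam.ne' u p)

lemma scale_kX1 (r β : ℝ) {lam : ℝ} (hlam : 0 < lam) (j k : Fin J) (p : Fin J → ℝ) :
    IK r (β / lam) (kX1 δ j k p) = lam ^ r * (lam * IK r β (kX1 δ j k (lam • p))) := by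
  rw [IK_scale r β hlam]
  congr 1
  exact IK_mul_kernel r β lam _ _ (fun u => kX1_scale δ j k hlam.ne' u p)

lemma scale_kX2 (r β : ℝ) {lam : ℝ} (hlam : 0 < lam) (j k : Fin J) (p : Fin J → ℝ) :
    IK r (β / lam) (kX2 δ j k p) = lam ^ r * (lam ^ 2 * IK r β (kX2 δ j k (lam • p))) := by
  rw [IK_scale r β hlam]
  congr 1
  exact IK_mul_kernel r β (lam ^ 2) _ _ (fun u => kX2_scale δ j k hlam.ne' u p)

end QGaux

namespace QGaux

lemma alg1 {c L l A0 A1 A2 : ℝ} (hc : c ≠ 0) (hA1 : A1 ≠ 0) (hL : L ≠ 0) (hl : l ≠ 0) :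
    -2 + L * A0 * (L * (l ^ 2 * A2)) / (L * (l * A1)) ^ 2
      = -2 + c * A0 * (c * A2) / (c * A1) ^ 2 := by
  field_simp

lemma alg2 {c L l A0 A1 X1 X2 : ℝ} (hc : c ≠ 0) (hA0 : A0 ≠ 0) (hA1 : A1 ≠ 0)
    (hL : L ≠ 0) (hl : l ≠ 0) :
    (L * (l ^ 2 * X2) * (L * A0) - L * (l * X1) * (L * (l * A1))) / (L * (l * A1)) ^ 2
      = (c * X2 * (c * A0) - c * X1 * (c * A1)) / (c * A0) ^ 2 / (c * A1 / (c * A0)) ^ 2 := by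
  field_simp

lemma alg_den {r pj Q0 Q1 : ℝ} (hr : r ≠ 0) (hpj : pj ≠ 0) (hQ0 : Q0 ≠ 0) :
    1 + -(pj / r) * (r * pj⁻¹ + Q1 / Q0) = -(pj * Q1 / (r * Q0)) := by
  field_simp
  ring

lemma alg3 {r pj Q0 Q1 Q2 : ℝ} (hr : r ≠ 0) (hpj : pj ≠ 0) (hQ0 : Q0 ≠ 0) (hQ1 : Q1 ≠ 0) :
    -1 + 1 / r *
      (1 + pj ^ 2 / r * (r * -((pj ^ 2)⁻¹) + (Q2 * Q0 - Q1 * Q1) / Q0 ^ 2)) /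
      (1 + -(pj / r) * (r * pj⁻¹ + Q1 / Q0)) ^ 2
    = -2 + Q0 * Q2 / Q1 ^ 2 := by
  rw [alg_den hr hpj hQ0]
  have hnum : 1 + pj ^ 2 / r * (r * -((pj ^ 2)⁻¹) + (Q2 * Q0 - Q1 * Q1) / Q0 ^ 2)
      = pj ^ 2 * (Q2 * Q0 - Q1 * Q1) / (r * Q0 ^ 2) := by
    field_simp
    ring
  rw [hnum]
  rw [neg_pow, div_pow]
  field_simp
  ring

lemma alg4 {r pj Q0 Q1 X1 X2 : ℝ} (hr : r ≠ 0) (hpj : pj ≠ 0) (hQ0 : Q0 ≠ 0) (hQ1 : Q1 ≠ 0) :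
    1 / r * (pj ^ 2 / r * ((X2 * Q0 - X1 * Q1) / Q0 ^ 2)) /
      (1 + -(pj / r) * (r * pj⁻¹ + Q1 / Q0)) ^ 2
    = (X2 * Q0 - X1 * Q1) / Q1 ^ 2 := by
  rw [alg_den hr hpj hQ0, neg_pow, div_pow]
  field_simp

end QGaux

namespace QGaux

open MeasureTheory

variable {J : ℕ} (δ : Fin J → ℝ)

lemma qG_eq (M r β : ℝ) (j : Fin J) (w : Fin J → ℝ) :
    qG δ M r β j w = M * (β ^ r / Real.Gamma r) * IK r β (kP δ j w) := by
  have hfun : (fun α => logitShare δ j w α *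
        (β ^ r / Real.Gamma r * α ^ (r - 1) * Real.exp (-β * α)))
      = fun α => β ^ r / Real.Gamma r *
          (α ^ (r - 1) * Real.exp (-(β * α)) * kP δ j w α) := by
    funext α
    show Psi δ j α w * _ = _
    rw [neg_mul]
    unfold kP
    ring
  unfold qG
  rw [hfun, integral_const_mul]
  unfold IK
  ring

lemma Hfun_eq (r : ℝ) (j : Fin J) (w : Fin J → ℝ) :
    Hfun δ r j w = IK r 0 (kP δ j w) := by
  unfold Hfun IK kP
  refine congrArg _ (funext fun z => ?_)
  simp

lemma ball_pos_half {t₀ t : ℝ} (ht₀ : 0 < t₀) (ht : t ∈ Metric.ball t₀ (t₀ / 2)) :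
    t₀ / 2 ≤ t := by
  rw [Metric.mem_ball, Real.dist_eq] at ht
  have := abs_lt.mp ht
  linarith [this.1]

lemma hasDerivAt_IK_kP_j (r c : ℝ) (hr : 0 < r) (hc : 0 ≤ c) (j : Fin J)
    (w : Fin J → ℝ) (hw : 0 < w j) :
    HasDerivAt (fun t => IK r c (kP δ j (Function.update w j t)))
      (IK r c (kD1 δ j w)) (w j) := by
  have h := hasDerivAt_IK r hr hc (a := w j / 2) (by linarith)
    (Cb := Real.exp (δ j)) (m := 1) (by norm_num) (m₀ := 0) (le_refl 0)
    (K := fun t => kP δ j (Function.update w j t))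
    (K' := fun t => kD1 δ j (Function.update w j t))
    (t₀ := w j) (ε := w j / 2) (by linarith)
    (fun t => cont_kP δ j _) (cont_kD1 δ j _)
    (fun u hu => by
      rw [Real.rpow_zero, one_mul]
      refine abs_kP_le δ j _ (le_of_lt hu) ?_
      rw [Function.update_self]; linarith)
    (fun u hu t ht => by
      rw [Real.rpow_one]
      refine abs_kD1_le δ j _ (le_of_lt hu) ?_
      rw [Function.update_self]
      exact ball_pos_half hw ht)
    (fun u hu t ht => hasDerivAt_Psi_same δ w j u t)
  simp only [Function.update_eq_self] at h
  exact h

lemma rpow_two_eq (u : ℝ) : u ^ (2:ℝ) = u ^ (2:ℕ) := by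
  rw [← Real.rpow_natCast u 2]; norm_num

lemma hasDerivAt_IK_kD1_j (r c : ℝ) (hr : 0 < r) (hc : 0 ≤ c) (j : Fin J)
    (w : Fin J → ℝ) (hw : 0 < w j) :
    HasDerivAt (fun t => IK r c (kD1 δ j (Function.update w j t)))
      (IK r c (kD2 δ j w)) (w j) := by
  have h := hasDerivAt_IK r hr hc (a := w j / 2) (by linarith)
    (Cb := Real.exp (δ j)) (m := 2) (by norm_num) (m₀ := 1) (by norm_num)
    (K := fun t => kD1 δ j (Function.update w j t))
    (K' := fun t => kD2 δ j (Function.update w j t))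
    (t₀ := w j) (ε := w j / 2) (by linarith)
    (fun t => cont_kD1 δ j _) (cont_kD2 δ j _)
    (fun u hu => by
      rw [Real.rpow_one]
      refine abs_kD1_le δ j _ (le_of_lt hu) ?_
      rw [Function.update_self]; linarith)
    (fun u hu t ht => by
      rw [rpow_two_eq]
      refine abs_kD2_le δ j _ (le_of_lt hu) ?_
      rw [Function.update_self]
      exact ball_pos_half hw ht)
    (fun u hu t ht => hasDerivAt_kD1 δ w j u t)
  simp only [Function.update_eq_self] at h
  exact h

lemma hasDerivAt_IK_kP_k (r c : ℝ) (hr : 0 < r) (hc : 0 ≤ c) {j k : Fin J} (hkj : k ≠ j)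
    (w : Fin J → ℝ) (hw : 0 < w j) :
    HasDerivAt (fun t => IK r c (kP δ j (Function.update w k t)))
      (IK r c (kX1 δ j k w)) (w k) := by
  have hupj : ∀ t, (Function.update w k t) j = w j := fun t =>
    Function.update_of_ne (Ne.symm hkj) t w
  have h := hasDerivAt_IK r hr hc (a := w j) hw
    (Cb := Real.exp (δ j)) (m := 1) (by norm_num) (m₀ := 0) (le_refl 0)
    (K := fun t => kP δ j (Function.update w k t))
    (K' := fun t => kX1 δ j k (Function.update w k t))
    (t₀ := w k) (ε := 1) one_pos
    (fun t => cont_kP δ j _) (cont_kX1 δ j k _)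
    (fun u hu => by
      rw [Real.rpow_zero, one_mul]
      refine abs_kP_le δ j _ (le_of_lt hu) ?_
      rw [hupj])
    (fun u hu t ht => by
      rw [Real.rpow_one]
      refine abs_kX1_le δ j k _ (le_of_lt hu) ?_
      rw [hupj])
    (fun u hu t ht => hasDerivAt_Psi_other δ w (Ne.symm hkj) u t)
  simp only [Function.update_eq_self] at h
  exact h

lemma hasDerivAt_IK_kX1_j (r c : ℝ) (hr : 0 < r) (hc : 0 ≤ c) {j k : Fin J} (hkj : k ≠ j)
    (w : Fin J → ℝ) (hw : 0 < w j) :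
    HasDerivAt (fun t => IK r c (kX1 δ j k (Function.update w j t)))
      (IK r c (kX2 δ j k w)) (w j) := by
  have h := hasDerivAt_IK r hr hc (a := w j / 2) (by linarith)
    (Cb := Real.exp (δ j)) (m := 2) (by norm_num) (m₀ := 1) (by norm_num)
    (K := fun t => kX1 δ j k (Function.update w j t))
    (K' := fun t => kX2 δ j k (Function.update w j t))
    (t₀ := w j) (ε := w j / 2) (by linarith)
    (fun t => cont_kX1 δ j k _) (cont_kX2 δ j k _)
    (fun u hu => by
      rw [Real.rpow_one]
      refine abs_kX1_le δ j k _ (le_of_lt hu) ?_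
      rw [Function.update_self]; linarith)
    (fun u hu t ht => by
      rw [rpow_two_eq]
      refine abs_kX2_le δ j k _ (le_of_lt hu) ?_
      rw [Function.update_self]
      exact ball_pos_half hw ht)
    (fun u hu t ht => hasDerivAt_kX1 δ w hkj u t)
  simp only [Function.update_eq_self] at h
  exact h

/-- positivity -/
lemma IK_kP_pos (r c : ℝ) (hr : 0 < r) (hc : 0 ≤ c) (j : Fin J)
    (w : Fin J → ℝ) (hw : 0 < w j) : 0 < IK r c (kP δ j w) := by
  refine IK_pos r hr hc hw (m := 0) (le_refl 0) (Real.exp_pos (δ j)).le (cont_kP δ j w)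
    (fun u hu => by rw [Real.rpow_zero, one_mul]; exact abs_kP_le δ j w (le_of_lt hu) le_rfl)
    (fun u hu => Psi_pos δ j u w)

lemma IK_kD1_neg (r c : ℝ) (hr : 0 < r) (hc : 0 ≤ c) (j : Fin J)
    (w : Fin J → ℝ) (hw : 0 < w j) : IK r c (kD1 δ j w) < 0 := by
  have hneg : IK r c (fun u => -(kD1 δ j w u)) = -IK r c (kD1 δ j w) := by
    unfold IK
    rw [← integral_neg]
    exact congrArg _ (funext fun u => by ring)
  have hpos : 0 < IK r c (fun u => -(kD1 δ j w u)) := by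
    refine IK_pos r hr hc hw (m := 1) (by norm_num) (Real.exp_pos (δ j)).le
      (cont_kD1 δ j w).neg
      (fun u hu => by
        rw [abs_neg, Real.rpow_one]
        exact abs_kD1_le δ j w (le_of_lt hu) le_rfl)
      (fun u hu => ?_)
    have h0 := Psi_pos δ j u w
    have h1 := Psi_lt_one δ j u w
    have hu' : (0:ℝ) < u := hu
    unfold kD1
    have : 0 < u * Psi δ j u w * (1 - Psi δ j u w) := by
      apply mul_pos (mul_pos hu' h0); linarith
    linarith
  linarith

lemma IK_kX1_pos (r c : ℝ) (hr : 0 < r) (hc : 0 ≤ c) (j k : Fin J)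
    (w : Fin J → ℝ) (hw : 0 < w j) : 0 < IK r c (kX1 δ j k w) := by
  refine IK_pos r hr hc hw (m := 1) (by norm_num) (Real.exp_pos (δ j)).le (cont_kX1 δ j k w)
    (fun u hu => by rw [Real.rpow_one]; exact abs_kX1_le δ j k w (le_of_lt hu) le_rfl)
    (fun u hu => ?_)
  have hu' : (0:ℝ) < u := hu
  exact mul_pos (mul_pos hu' (Psi_pos δ j u w)) (Psi_pos δ k u w)

end QGaux

namespace QGaux

open MeasureTheory

variable {J : ℕ} (δ : Fin J → ℝ)

section qGside

variable (M r β : ℝ)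

lemma hasDerivAt_qG_j (hr : 0 < r) (hβ : 0 < β) (j : Fin J) (w : Fin J → ℝ) (hw : 0 < w j) :
    HasDerivAt (fun t => qG δ M r β j (Function.update w j t))
      (M * (β ^ r / Real.Gamma r) * IK r β (kD1 δ j w)) (w j) := by
  have h2 := (hasDerivAt_IK_kP_j δ r β hr hβ.le j w hw).const_mul (M * (β ^ r / Real.Gamma r))
  have hfun : (fun t => qG δ M r β j (Function.update w j t))
      = fun t => M * (β ^ r / Real.Gamma r) * IK r β (kP δ j (Function.update w j t)) :=
    funext fun t => qG_eq δ M r β j _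
  rw [hfun]; exact h2

lemma pd_qG_j (hr : 0 < r) (hβ : 0 < β) (j : Fin J) (w : Fin J → ℝ) (hw : 0 < w j) :
    pd (qG δ M r β j) j w = M * (β ^ r / Real.Gamma r) * IK r β (kD1 δ j w) :=
  (hasDerivAt_qG_j δ M r β hr hβ j w hw).deriv

lemma hasDerivAt_qG_k (hr : 0 < r) (hβ : 0 < β) {j k : Fin J} (hkj : k ≠ j) (w : Fin J → ℝ) (hw : 0 < w j) :
    HasDerivAt (fun t => qG δ M r β j (Function.update w k t))
      (M * (β ^ r / Real.Gamma r) * IK r β (kX1 δ j k w)) (w k) := by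
  have h2 := (hasDerivAt_IK_kP_k δ r β hr hβ.le hkj w hw).const_mul (M * (β ^ r / Real.Gamma r))
  have hfun : (fun t => qG δ M r β j (Function.update w k t))
      = fun t => M * (β ^ r / Real.Gamma r) * IK r β (kP δ j (Function.update w k t)) :=
    funext fun t => qG_eq δ M r β j _
  rw [hfun]; exact h2

lemma pd_qG_k (hr : 0 < r) (hβ : 0 < β) {j k : Fin J} (hkj : k ≠ j) (w : Fin J → ℝ) (hw : 0 < w j) :
    pd (qG δ M r β j) k w = M * (β ^ r / Real.Gamma r) * IK r β (kX1 δ j k w) :=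
  (hasDerivAt_qG_k δ M r β hr hβ hkj w hw).deriv

lemma pd_pd_qG_jj (hr : 0 < r) (hβ : 0 < β) (j : Fin J) (w : Fin J → ℝ) (hw : 0 < w j) :
    pd (pd (qG δ M r β j) j) j w = M * (β ^ r / Real.Gamma r) * IK r β (kD2 δ j w) := by
  show deriv (fun t => pd (qG δ M r β j) j (Function.update w j t)) (w j) = _
  have hEq : (fun t => pd (qG δ M r β j) j (Function.update w j t)) =ᶠ[nhds (w j)]
      fun t => M * (β ^ r / Real.Gamma r) * IK r β (kD1 δ j (Function.update w j t)) := by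
    filter_upwards [eventually_gt_nhds hw] with t ht
    exact pd_qG_j δ M r β hr hβ j (Function.update w j t)
      (by rw [Function.update_self]; exact ht)
  rw [hEq.deriv_eq]
  exact ((hasDerivAt_IK_kD1_j δ r β hr hβ.le j w hw).const_mul
    (M * (β ^ r / Real.Gamma r))).deriv

lemma qG_pos (hM : 0 < M) (hr : 0 < r) (hβ : 0 < β) (j : Fin J) (w : Fin J → ℝ) (hw : 0 < w j) : 0 < qG δ M r β j w := by
  rw [qG_eq]
  have h1 : 0 < β ^ r / Real.Gamma r :=
    div_pos (Real.rpow_pos_of_pos hβ r) (Real.Gamma_pos_of_pos hr)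
  exact mul_pos (mul_pos hM h1) (IK_kP_pos δ r β hr hβ.le j w hw)

lemma pd_ratio_j (hM : 0 < M) (hr : 0 < r) (hβ : 0 < β) {j k : Fin J} (hkj : k ≠ j) (w : Fin J → ℝ) (hw : 0 < w j) :
    pd (fun q => pd (qG δ M r β j) k q / qG δ M r β j q) j w
      = (M * (β ^ r / Real.Gamma r) * IK r β (kX2 δ j k w) *
          (M * (β ^ r / Real.Gamma r) * IK r β (kP δ j w)) -
         M * (β ^ r / Real.Gamma r) * IK r β (kX1 δ j k w) *
          (M * (β ^ r / Real.Gamma r) * IK r β (kD1 δ j w))) /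
        (M * (β ^ r / Real.Gamma r) * IK r β (kP δ j w)) ^ 2 := by
  show deriv (fun t => pd (qG δ M r β j) k (Function.update w j t) /
      qG δ M r β j (Function.update w j t)) (w j) = _
  have hEq : (fun t => pd (qG δ M r β j) k (Function.update w j t) /
        qG δ M r β j (Function.update w j t)) =ᶠ[nhds (w j)]
      fun t => M * (β ^ r / Real.Gamma r) * IK r β (kX1 δ j k (Function.update w j t)) /
        (M * (β ^ r / Real.Gamma r) * IK r β (kP δ j (Function.update w j t))) := by
    filter_upwards [eventually_gt_nhds hw] with t ht
    rw [pd_qG_k δ M r β hr hβ hkj (Function.update w j t)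
      (by rw [Function.update_self]; exact ht),
      qG_eq δ M r β j (Function.update w j t)]
  rw [hEq.deriv_eq]
  have hnum := (hasDerivAt_IK_kX1_j δ r β hr hβ.le hkj w hw).const_mul
    (M * (β ^ r / Real.Gamma r))
  have hden := (hasDerivAt_IK_kP_j δ r β hr hβ.le j w hw).const_mul
    (M * (β ^ r / Real.Gamma r))
  have h1 : 0 < β ^ r / Real.Gamma r :=
    div_pos (Real.rpow_pos_of_pos hβ r) (Real.Gamma_pos_of_pos hr)
  have hne : M * (β ^ r / Real.Gamma r) * IK r β (kP δ j w) ≠ 0 :=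
    (mul_pos (mul_pos hM h1) (IK_kP_pos δ r β hr hβ.le j w hw)).ne'
  have hdiv := hnum.div hden (by rw [Function.update_eq_self]; exact hne)
  simp only [Function.update_eq_self] at hdiv
  exact hdiv.deriv

end qGside

end QGaux

namespace QGaux

open MeasureTheory

variable {J : ℕ} (δ : Fin J → ℝ)

lemma Cfun_eq (r : ℝ) (hr : 0 < r) (j : Fin J) (s : Fin J → ℝ) (hs : ∀ i, 0 < s i) :
    Cfun δ r j s = s j ^ r * Real.exp (-(δ j)) / Real.Gamma r * Hfun δ r j s := by
  have hsj := hs j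
  have h := integral_comp_mul_left_Ioi
    (fun u => u ^ (r - 1) * Real.exp (-u) / (1 + ∑ l, Real.exp (δ l - s l / s j * u)))
    0 hsj
  rw [mul_zero] at h
  have key : (∫ x in Set.Ioi (0:ℝ),
        (s j * x) ^ (r - 1) * Real.exp (-(s j * x)) /
          (1 + ∑ l, Real.exp (δ l - s l / s j * (s j * x))))
      = s j ^ (r - 1) * Real.exp (-(δ j)) * Hfun δ r j s := by
    unfold Hfun
    rw [← integral_const_mul]
    refine setIntegral_congr_fun measurableSet_Ioi fun x hx => ?_
    have hx' : (0:ℝ) < x := hx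
    have harg : ∀ l, δ l - s l / s j * (s j * x) = δ l - x * s l := fun l => by
      field_simp
    have hexp : Real.exp (-(δ j)) * Real.exp (δ j - x * s j) = Real.exp (-(s j * x)) := by
      rw [← Real.exp_add]; ring_nf
    simp only [harg]
    rw [Real.mul_rpow hsj.le hx'.le, Psi_eq]
    unfold den
    rw [← hexp]
    ring
  have h2 : (∫ u in Set.Ioi (0:ℝ),
        u ^ (r - 1) * Real.exp (-u) / (1 + ∑ l, Real.exp (δ l - s l / s j * u)))
      = s j * (s j ^ (r - 1) * Real.exp (-(δ j)) * Hfun δ r j s) := by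
    beta_reduce at h
    rw [← key, h, smul_eq_mul, ← mul_assoc, mul_inv_cancel₀ hsj.ne', one_mul]
  unfold Cfun
  rw [h2]
  have hlr : s j * s j ^ (r - 1) = s j ^ r := by
    conv_rhs => rw [show r = 1 + (r - 1) by ring]
    rw [Real.rpow_add hsj, Real.rpow_one]
  field_simp
  rw [← hlr]
  ring

lemma Hfun_pos (r : ℝ) (hr : 0 < r) (j : Fin J) (s : Fin J → ℝ) (hs : 0 < s j) :
    0 < Hfun δ r j s := by
  rw [Hfun_eq]; exact IK_kP_pos δ r 0 hr le_rfl j s hs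

lemma logC_eq (r : ℝ) (hr : 0 < r) (j : Fin J) (s : Fin J → ℝ) (hs : ∀ i, 0 < s i) :
    Real.log (Cfun δ r j s)
      = r * Real.log (s j) +
        (Real.log (Hfun δ r j s) - δ j - Real.log (Real.Gamma r)) := by
  rw [Cfun_eq δ r hr j s hs]
  have hΓ := Real.Gamma_pos_of_pos hr
  have hH := Hfun_pos δ r hr j s (hs j)
  have hrp : (0:ℝ) < s j ^ r := Real.rpow_pos_of_pos (hs j) r
  rw [Real.log_mul (by positivity) hH.ne', Real.log_div (by positivity) hΓ.ne',
    Real.log_mul hrp.ne' (Real.exp_pos _).ne', Real.log_rpow (hs j), Real.log_exp]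
  ring

lemma update_pos_orthant {s : Fin J → ℝ} (hs : ∀ i, 0 < s i) {i : Fin J} {t : ℝ}
    (ht : 0 < t) : ∀ i', 0 < Function.update s i t i' := by
  intro i'
  rw [Function.update_apply]
  split
  · exact ht
  · exact hs i'

lemma pd_logC_j (r : ℝ) (hr : 0 < r) (j : Fin J) (s : Fin J → ℝ) (hs : ∀ i, 0 < s i) :
    pd (fun q => Real.log (Cfun δ r j q)) j s
      = r * (s j)⁻¹ + IK r 0 (kD1 δ j s) / IK r 0 (kP δ j s) := by
  show deriv (fun t => Real.log (Cfun δ r j (Function.update s j t))) (s j) = _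
  have hEq : (fun t => Real.log (Cfun δ r j (Function.update s j t))) =ᶠ[nhds (s j)]
      fun t => r * Real.log t +
        (Real.log (IK r 0 (kP δ j (Function.update s j t))) - δ j -
          Real.log (Real.Gamma r)) := by
    filter_upwards [eventually_gt_nhds (hs j)] with t ht
    rw [logC_eq δ r hr j _ (update_pos_orthant hs ht), Hfun_eq, Function.update_self]
  rw [hEq.deriv_eq]
  have h1 : HasDerivAt (fun t : ℝ => r * Real.log t) (r * (s j)⁻¹) (s j) :=
    (Real.hasDerivAt_log (hs j).ne').const_mul r
  have h2 := (hasDerivAt_IK_kP_j δ r 0 hr le_rfl j s (hs j)).log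
    (by rw [Function.update_eq_self]; exact (IK_kP_pos δ r 0 hr le_rfl j s (hs j)).ne')
  simp only [Function.update_eq_self] at h2
  exact (h1.add ((h2.sub_const (δ j)).sub_const (Real.log (Real.Gamma r)))).deriv

lemma pd_logC_k (r : ℝ) (hr : 0 < r) {j k : Fin J} (hkj : k ≠ j) (s : Fin J → ℝ)
    (hs : ∀ i, 0 < s i) :
    pd (fun q => Real.log (Cfun δ r j q)) k s
      = IK r 0 (kX1 δ j k s) / IK r 0 (kP δ j s) := by
  show deriv (fun t => Real.log (Cfun δ r j (Function.update s k t))) (s k) = _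
  have hEq : (fun t => Real.log (Cfun δ r j (Function.update s k t))) =ᶠ[nhds (s k)]
      fun t => r * Real.log (s j) +
        (Real.log (IK r 0 (kP δ j (Function.update s k t))) - δ j -
          Real.log (Real.Gamma r)) := by
    filter_upwards [eventually_gt_nhds (hs k)] with t ht
    rw [logC_eq δ r hr j _ (update_pos_orthant hs ht), Hfun_eq,
      Function.update_of_ne (Ne.symm hkj)]
  rw [hEq.deriv_eq]
  have h2 := (hasDerivAt_IK_kP_k δ r 0 hr le_rfl hkj s (hs j)).log
    (by rw [Function.update_eq_self]; exact (IK_kP_pos δ r 0 hr le_rfl j s (hs j)).ne')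
  simp only [Function.update_eq_self] at h2
  have h3 := ((hasDerivAt_const (s k) (r * Real.log (s j))).add
    ((h2.sub_const (δ j)).sub_const (Real.log (Real.Gamma r)))).deriv
  exact h3.trans (zero_add _)

lemma pd_pd_logC_jj (r : ℝ) (hr : 0 < r) (j : Fin J) (p : Fin J → ℝ)
    (hp : ∀ i, 0 < p i) :
    pd (pd (fun q => Real.log (Cfun δ r j q)) j) j p
      = r * -(((p j) ^ 2)⁻¹) +
        (IK r 0 (kD2 δ j p) * IK r 0 (kP δ j p) -
          IK r 0 (kD1 δ j p) * IK r 0 (kD1 δ j p)) / (IK r 0 (kP δ j p)) ^ 2 := by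
  show deriv (fun t => pd (fun q => Real.log (Cfun δ r j q)) j
    (Function.update p j t)) (p j) = _
  have hEq : (fun t => pd (fun q => Real.log (Cfun δ r j q)) j (Function.update p j t))
      =ᶠ[nhds (p j)]
      fun t => r * t⁻¹ + IK r 0 (kD1 δ j (Function.update p j t)) /
        IK r 0 (kP δ j (Function.update p j t)) := by
    filter_upwards [eventually_gt_nhds (hp j)] with t ht
    rw [pd_logC_j δ r hr j _ (update_pos_orthant hp ht), Function.update_self]
  rw [hEq.deriv_eq]
  have h1 : HasDerivAt (fun t : ℝ => r * t⁻¹) (r * -(((p j) ^ 2)⁻¹)) (p j) :=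
    (hasDerivAt_inv (hp j).ne').const_mul r
  have hnum := hasDerivAt_IK_kD1_j δ r 0 hr le_rfl j p (hp j)
  have hden := hasDerivAt_IK_kP_j δ r 0 hr le_rfl j p (hp j)
  have hne : IK r 0 (kP δ j p) ≠ 0 := (IK_kP_pos δ r 0 hr le_rfl j p (hp j)).ne'
  have hdiv := hnum.div hden (by rw [Function.update_eq_self]; exact hne)
  simp only [Function.update_eq_self] at hdiv
  exact (h1.add hdiv).deriv

lemma pd_pd_logC_jk (r : ℝ) (hr : 0 < r) {j k : Fin J} (hkj : k ≠ j) (p : Fin J → ℝ)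
    (hp : ∀ i, 0 < p i) :
    pd (pd (fun q => Real.log (Cfun δ r j q)) k) j p
      = (IK r 0 (kX2 δ j k p) * IK r 0 (kP δ j p) -
          IK r 0 (kX1 δ j k p) * IK r 0 (kD1 δ j p)) / (IK r 0 (kP δ j p)) ^ 2 := by
  show deriv (fun t => pd (fun q => Real.log (Cfun δ r j q)) k
    (Function.update p j t)) (p j) = _
  have hEq : (fun t => pd (fun q => Real.log (Cfun δ r j q)) k (Function.update p j t))
      =ᶠ[nhds (p j)]
      fun t => IK r 0 (kX1 δ j k (Function.update p j t)) /
        IK r 0 (kP δ j (Function.update p j t)) := by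
    filter_upwards [eventually_gt_nhds (hp j)] with t ht
    rw [pd_logC_k δ r hr hkj _ (update_pos_orthant hp ht)]
  rw [hEq.deriv_eq]
  have hnum := hasDerivAt_IK_kX1_j δ r 0 hr le_rfl hkj p (hp j)
  have hden := hasDerivAt_IK_kP_j δ r 0 hr le_rfl j p (hp j)
  have hne : IK r 0 (kP δ j p) ≠ 0 := (IK_kP_pos δ r 0 hr le_rfl j p (hp j)).ne'
  have hdiv := hnum.div hden (by rw [Function.update_eq_self]; exact hne)
  simp only [Function.update_eq_self] at hdiv
  exact hdiv.deriv

end QGaux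


open QGaux

/-- Ray limits for gamma mixed logit. With
`κ_{jj}^j(p) = q_j ∂²_{p_j p_j} q_j / (∂_{p_j} q_j)²`, `η_{jk} = ∂_{p_k} q_j / q_j`,
`ζ_j = −(p_j/r) ∂_{p_j} log C_j`, `χ_j = (p_j²/r) ∂²_{p_j p_j} log C_j`, and
`ξ_{jk} = (p_j²/r) ∂²_{p_j p_k} log C_j`, along any ray `p ∈ ℝ_{++}^J`:
`−2 + κ_{jj}^j(λp) → −1 + (1/r)(1 + χ_j(p))/(1 + ζ_j(p))²` and, for `k ≠ j`,
`∂_{p_j} η_{jk}(λp) / η_{jj}(λp)² → (1/r) ξ_{jk}(p)/(1 + ζ_j(p))²`. -/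
theorem qG_ray_limits_pass_through {J : ℕ} (hJ : 1 ≤ J) (M : ℝ) (hM : 0 < M)
    (δ : Fin J → ℝ) (r β : ℝ) (hr : 0 < r) (hβ : 0 < β)
    (p : Fin J → ℝ) (hp : ∀ i, 0 < p i) (j k : Fin J) (hkj : k ≠ j) :
    Tendsto (fun l : ℝ => -2 +
        qG δ M r β j (l • p) * pd (pd (qG δ M r β j) j) j (l • p) /
          (pd (qG δ M r β j) j (l • p)) ^ 2)
      atTop
      (nhds (-1 + 1 / r *
        (1 + p j ^ 2 / r * pd (pd (fun q => Real.log (Cfun δ r j q)) j) j p) /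
        (1 + -(p j / r) * pd (fun q => Real.log (Cfun δ r j q)) j p) ^ 2)) ∧
    Tendsto (fun l : ℝ =>
        pd (fun q => pd (qG δ M r β j) k q / qG δ M r β j q) j (l • p) /
          (pd (qG δ M r β j) j (l • p) / qG δ M r β j (l • p)) ^ 2)
      atTop
      (nhds (1 / r *
        (p j ^ 2 / r * pd (pd (fun q => Real.log (Cfun δ r j q)) k) j p) /
        (1 + -(p j / r) * pd (fun q => Real.log (Cfun δ r j q)) j p) ^ 2)) := by
  have hcβ : 0 < β ^ r / Real.Gamma r :=
    div_pos (Real.rpow_pos_of_pos hβ r) (Real.Gamma_pos_of_pos hr)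
  have hQ0 : 0 < IK r 0 (kP δ j p) := IK_kP_pos δ r 0 hr le_rfl j p (hp j)
  have hQ1 : IK r 0 (kD1 δ j p) < 0 := IK_kD1_neg δ r 0 hr le_rfl j p (hp j)
  -- limits of the rescaled integrals
  have T0 : Tendsto (fun l : ℝ => IK r (β / l) (kP δ j p)) atTop
      (nhds (IK r 0 (kP δ j p))) :=
    tendsto_IK r β hr hβ (hp j) (m := 0) le_rfl (Real.exp_pos (δ j)).le (cont_kP δ j p)
      (fun u hu => by
        rw [Real.rpow_zero, one_mul]
        exact abs_kP_le δ j p (le_of_lt hu) le_rfl)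
  have T1 : Tendsto (fun l : ℝ => IK r (β / l) (kD1 δ j p)) atTop
      (nhds (IK r 0 (kD1 δ j p))) :=
    tendsto_IK r β hr hβ (hp j) (m := 1) zero_le_one (Real.exp_pos (δ j)).le (cont_kD1 δ j p)
      (fun u hu => by
        rw [Real.rpow_one]
        exact abs_kD1_le δ j p (le_of_lt hu) le_rfl)
  have T2 : Tendsto (fun l : ℝ => IK r (β / l) (kD2 δ j p)) atTop
      (nhds (IK r 0 (kD2 δ j p))) :=
    tendsto_IK r β hr hβ (hp j) (m := 2) (by norm_num) (Real.exp_pos (δ j)).le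
      (cont_kD2 δ j p)
      (fun u hu => by
        rw [rpow_two_eq]
        exact abs_kD2_le δ j p (le_of_lt hu) le_rfl)
  have TX1 : Tendsto (fun l : ℝ => IK r (β / l) (kX1 δ j k p)) atTop
      (nhds (IK r 0 (kX1 δ j k p))) :=
    tendsto_IK r β hr hβ (hp j) (m := 1) zero_le_one (Real.exp_pos (δ j)).le
      (cont_kX1 δ j k p)
      (fun u hu => by
        rw [Real.rpow_one]
        exact abs_kX1_le δ j k p (le_of_lt hu) le_rfl)
  have TX2 : Tendsto (fun l : ℝ => IK r (β / l) (kX2 δ j k p)) atTop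
      (nhds (IK r 0 (kX2 δ j k p))) :=
    tendsto_IK r β hr hβ (hp j) (m := 2) (by norm_num) (Real.exp_pos (δ j)).le
      (cont_kX2 δ j k p)
      (fun u hu => by
        rw [rpow_two_eq]
        exact abs_kX2_le δ j k p (le_of_lt hu) le_rfl)
  have Tsq : Tendsto (fun l : ℝ => (IK r (β / l) (kD1 δ j p)) ^ 2) atTop
      (nhds ((IK r 0 (kD1 δ j p)) ^ 2)) := T1.pow 2
  have hQ1sq : (IK r 0 (kD1 δ j p)) ^ 2 ≠ 0 := pow_ne_zero 2 hQ1.ne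
  constructor
  · -- part 1
    have key1 : Tendsto (fun l : ℝ => -2 +
        IK r (β / l) (kP δ j p) * IK r (β / l) (kD2 δ j p) /
          (IK r (β / l) (kD1 δ j p)) ^ 2) atTop
        (nhds (-2 + IK r 0 (kP δ j p) * IK r 0 (kD2 δ j p) / (IK r 0 (kD1 δ j p)) ^ 2)) :=
      tendsto_const_nhds.add ((T0.mul T2).div Tsq hQ1sq)
    have hev1 : (fun l : ℝ => -2 +
          IK r (β / l) (kP δ j p) * IK r (β / l) (kD2 δ j p) /
            (IK r (β / l) (kD1 δ j p)) ^ 2)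
        =ᶠ[atTop] (fun l : ℝ => -2 +
          qG δ M r β j (l • p) * pd (pd (qG δ M r β j) j) j (l • p) /
            (pd (qG δ M r β j) j (l • p)) ^ 2) := by
      filter_upwards [eventually_gt_atTop (0:ℝ)] with l hl
      have hlw : 0 < (l • p) j := by
        rw [Pi.smul_apply, smul_eq_mul]; exact mul_pos hl (hp j)
      have hA0 : 0 < IK r β (kP δ j (l • p)) := IK_kP_pos δ r β hr hβ.le j (l • p) hlw
      have hA1 : IK r β (kD1 δ j (l • p)) < 0 := IK_kD1_neg δ r β hr hβ.le j (l • p) hlw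
      have hlr : (0:ℝ) < l ^ r := Real.rpow_pos_of_pos hl r
      rw [qG_eq δ M r β j (l • p), pd_qG_j δ M r β hr hβ j (l • p) hlw,
        pd_pd_qG_jj δ M r β hr hβ j (l • p) hlw,
        scale_kP δ r β hl j p, scale_kD1 δ r β hl j p, scale_kD2 δ r β hl j p]
      exact alg1 (mul_pos hM hcβ).ne' hA1.ne hlr.ne' hl.ne'
    rw [pd_pd_logC_jj δ r hr j p hp, pd_logC_j δ r hr j p hp]
    rw [alg3 hr.ne' (hp j).ne' hQ0.ne' hQ1.ne]
    have hcomm : IK r 0 (kD2 δ j p) * IK r 0 (kP δ j p)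
        = IK r 0 (kP δ j p) * IK r 0 (kD2 δ j p) := mul_comm _ _
    exact Filter.Tendsto.congr' hev1 key1
  · -- part 2
    have key2 : Tendsto (fun l : ℝ =>
        (IK r (β / l) (kX2 δ j k p) * IK r (β / l) (kP δ j p) -
          IK r (β / l) (kX1 δ j k p) * IK r (β / l) (kD1 δ j p)) /
          (IK r (β / l) (kD1 δ j p)) ^ 2) atTop
        (nhds ((IK r 0 (kX2 δ j k p) * IK r 0 (kP δ j p) -
          IK r 0 (kX1 δ j k p) * IK r 0 (kD1 δ j p)) / (IK r 0 (kD1 δ j p)) ^ 2)) :=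
      ((TX2.mul T0).sub (TX1.mul T1)).div Tsq hQ1sq
    have hev2 : (fun l : ℝ =>
          (IK r (β / l) (kX2 δ j k p) * IK r (β / l) (kP δ j p) -
            IK r (β / l) (kX1 δ j k p) * IK r (β / l) (kD1 δ j p)) /
            (IK r (β / l) (kD1 δ j p)) ^ 2)
        =ᶠ[atTop] (fun l : ℝ =>
          pd (fun q => pd (qG δ M r β j) k q / qG δ M r β j q) j (l • p) /
            (pd (qG δ M r β j) j (l • p) / qG δ M r β j (l • p)) ^ 2) := by
      filter_upwards [eventually_gt_atTop (0:ℝ)] with l hl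
      have hlw : 0 < (l • p) j := by
        rw [Pi.smul_apply, smul_eq_mul]; exact mul_pos hl (hp j)
      have hA0 : 0 < IK r β (kP δ j (l • p)) := IK_kP_pos δ r β hr hβ.le j (l • p) hlw
      have hA1 : IK r β (kD1 δ j (l • p)) < 0 := IK_kD1_neg δ r β hr hβ.le j (l • p) hlw
      have hlr : (0:ℝ) < l ^ r := Real.rpow_pos_of_pos hl r
      rw [pd_ratio_j δ M r β hM hr hβ hkj (l • p) hlw,
        pd_qG_j δ M r β hr hβ j (l • p) hlw, qG_eq δ M r β j (l • p),
        scale_kP δ r β hl j p, scale_kD1 δ r β hl j p,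
        scale_kX1 δ r β hl j k p, scale_kX2 δ r β hl j k p]
      exact alg2 (mul_pos hM hcβ).ne' hA0.ne' hA1.ne hlr.ne' hl.ne'
    rw [pd_pd_logC_jk δ r hr hkj p hp, pd_logC_j δ r hr j p hp]
    rw [alg4 hr.ne' (hp j).ne' hQ0.ne' hQ1.ne]
    exact Filter.Tendsto.congr' hev2 key2
end
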